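/- arXiv:2305.08608 — 6 statements merged into one kernel-verified Lean document; each statement's English description precedes it below -/
import Mathlib

section
/- Let A be a Schur ring over the infinite dihedral group D∞ and let C be the basic set of A containing z. If C is contained in the subgroup Z = ⟨z⟩, then Z is an A-subgroup. -/
open scoped BigOperators
open scoped Pointwise

/-- A Schur ring over the group `G` with coefficients in the field `F`, presented by its
partition into finite nonempty basic sets. -/
structure SchurRing (F : Type) [Field F] [CharZero F] (G : Type) [Group G] [DecidableEq G] where
  /-- the basic sets -/
  parts : Set (Finset G)
  nonempty : ∀ C ∈ parts, C.Nonempty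
  cover : ∀ g : G, ∃ C ∈ parts, g ∈ C
  eq_or_disjoint : ∀ C ∈ parts, ∀ D ∈ parts, C = D ∨ Disjoint C D
  one_mem : ({1} : Finset G) ∈ parts
  inv_mem : ∀ C ∈ parts, C.image (·⁻¹) ∈ parts
  mul_mem : ∀ C ∈ parts, ∀ D ∈ parts, ∃ S : Finset (Finset G),
    (↑S : Set (Finset G)) ⊆ parts ∧ ∃ coef : Finset G → F,
      (∑ g ∈ C, MonoidAlgebra.single g (1 : F)) * (∑ g ∈ D, MonoidAlgebra.single g (1 : F))
        = ∑ E ∈ S, coef E • ∑ g ∈ E, MonoidAlgebra.single g (1 : F)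

/-- A subset of `G` is an `A`-set if it is a union of basic sets of `A`. -/
def SchurRing.IsASet {F : Type} [Field F] [CharZero F] {G : Type} [Group G] [DecidableEq G]
    (A : SchurRing F G) (X : Set G) : Prop :=
  ∃ 𝒮 : Set (Finset G), 𝒮 ⊆ A.parts ∧ X = ⋃ C ∈ 𝒮, (C : Set G)

/-- The infinite dihedral group, realized as `DihedralGroup 0`. -/
abbrev Dinf : Type := DihedralGroup 0

/-- The generator `z` of infinite order. -/
def zz : Dinf := DihedralGroup.r 1

/-- The reflection `s` of order two. -/
def ss : Dinf := DihedralGroup.sr 0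

section Aux
variable {F : Type} [Field F] [CharZero F] {G : Type} [Group G] [DecidableEq G]

lemma eval_sum_single (E : Finset G) (y : G) :
    ((∑ g ∈ E, MonoidAlgebra.single g (1 : F)) : MonoidAlgebra F G).coeff y
      = if y ∈ E then 1 else 0 := by
  rw [MonoidAlgebra.coeff_sum, Finsupp.finset_sum_apply]
  simp only [MonoidAlgebra.coeff_single, Finsupp.single_apply]
  rw [Finset.sum_ite_eq' E y (fun _ => (1 : F))]

lemma schur_key (A : SchurRing F G) {C D : Finset G} (hC : C ∈ A.parts) (hD : D ∈ A.parts) :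
    ∀ x ∈ C * D, ∃ E ∈ A.parts, x ∈ E ∧ E ⊆ C * D := by
  obtain ⟨S, hS, coef, heq⟩ := A.mul_mem C hC D hD
  have hL : ∀ y : G,
      (((∑ g ∈ C, MonoidAlgebra.single g (1 : F)) *
        (∑ g ∈ D, MonoidAlgebra.single g (1 : F))) : MonoidAlgebra F G).coeff y
        = ((((C ×ˢ D).filter (fun p => p.1 * p.2 = y)).card : ℕ) : F) := by
    intro y
    rw [Finset.sum_mul_sum]
    simp only [MonoidAlgebra.single_mul_single, one_mul]
    rw [MonoidAlgebra.coeff_sum, Finsupp.finset_sum_apply]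
    have hinner : ∀ i : G, ((∑ x ∈ D, MonoidAlgebra.single (i * x) (1 : F)) : MonoidAlgebra F G).coeff y
        = ∑ x ∈ D, if i * x = y then (1 : F) else 0 := by
      intro i
      rw [MonoidAlgebra.coeff_sum, Finsupp.finset_sum_apply]
      refine Finset.sum_congr rfl fun x _ => ?_
      exact Finsupp.single_apply
    simp only [hinner]
    rw [← Finset.sum_product', Finset.sum_boole]
  have hLne : ∀ y : G,
      ((((∑ g ∈ C, MonoidAlgebra.single g (1 : F)) *
        (∑ g ∈ D, MonoidAlgebra.single g (1 : F))) : MonoidAlgebra F G).coeff y ≠ 0 ↔ y ∈ C * D) := by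
    intro y
    rw [hL, Nat.cast_ne_zero, Finset.card_ne_zero, Finset.filter_nonempty_iff]
    constructor
    · rintro ⟨⟨a, b⟩, hab, h⟩
      rw [Finset.mem_product] at hab
      rw [← h]
      exact Finset.mul_mem_mul hab.1 hab.2
    · intro hy
      rw [Finset.mem_mul] at hy
      obtain ⟨a, ha, b, hb, hab⟩ := hy
      exact ⟨(a, b), Finset.mem_product.mpr ⟨ha, hb⟩, hab⟩
  have hR : ∀ y : G,
      ((∑ E ∈ S, coef E • ∑ g ∈ E, MonoidAlgebra.single g (1 : F)) : MonoidAlgebra F G).coeff y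
        = ∑ E ∈ S, coef E * (if y ∈ E then 1 else 0) := by
    intro y
    rw [MonoidAlgebra.coeff_sum, Finsupp.finset_sum_apply]
    refine Finset.sum_congr rfl fun E _ => ?_
    rw [MonoidAlgebra.coeff_smul, Finsupp.smul_apply, eval_sum_single, smul_eq_mul]
  intro x hx
  have hx0 : (∑ E ∈ S, coef E * (if x ∈ E then 1 else 0)) ≠ 0 := by
    rw [← hR, ← heq]; exact (hLne x).mpr hx
  obtain ⟨E, hES, hEne⟩ := Finset.exists_ne_zero_of_sum_ne_zero hx0
  have hxE : x ∈ E := by by_contra h; simp [h] at hEne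
  have hcoef : coef E ≠ 0 := by intro h; simp [h] at hEne
  refine ⟨E, hS hES, hxE, fun y hyE => ?_⟩
  rw [← hLne y, heq, hR]
  have hsum : (∑ E' ∈ S, coef E' * (if y ∈ E' then 1 else 0)) = coef E := by
    rw [Finset.sum_eq_single E]
    · simp [hyE]
    · intro E' hE'S hne
      have hdisj : Disjoint E' E := by
        rcases A.eq_or_disjoint E' (hS hE'S) E (hS hES) with h | h
        · exact absurd h hne
        · exact h
      have : y ∉ E' := fun hy => (Finset.disjoint_left.mp hdisj hy) hyE
      simp [this]
    · intro h; exact absurd hES h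
  rw [hsum]; exact hcoef

def SchurGood (A : SchurRing F G) (X : Finset G) : Prop :=
  ∀ x ∈ X, ∃ E ∈ A.parts, x ∈ E ∧ E ⊆ X

lemma schurGood_mul (A : SchurRing F G) {X D : Finset G} (hX : SchurGood A X)
    (hD : D ∈ A.parts) : SchurGood A (X * D) := by
  intro x hx
  rw [Finset.mem_mul] at hx
  obtain ⟨a, ha, b, hb, rfl⟩ := hx
  obtain ⟨E, hE, haE, hEX⟩ := hX a ha
  obtain ⟨E', hE', hxE', hsub⟩ := schur_key A hE hD _ (Finset.mul_mem_mul haE hb)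
  exact ⟨E', hE', hxE', hsub.trans (Finset.mul_subset_mul_right hEX)⟩

lemma schurGood_pow (A : SchurRing F G) {D : Finset G} (hD : D ∈ A.parts) :
    ∀ n : ℕ, SchurGood A (D ^ n)
  | 0 => by
      intro x hx
      rw [pow_zero, Finset.mem_one] at hx
      subst hx
      exact ⟨{1}, A.one_mem, Finset.mem_singleton_self 1, by rw [pow_zero]; simp⟩
  | (n + 1) => by
      rw [pow_succ]
      exact schurGood_mul A (schurGood_pow A hD n) hD

lemma pow_subset_subgroup {H : Subgroup G} {D : Finset G} (hD : (D : Set G) ⊆ H) :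
    ∀ n : ℕ, ((D ^ n : Finset G) : Set G) ⊆ H
  | 0 => by
      rw [pow_zero]
      intro x hx
      simp only [Finset.coe_one, Set.mem_one] at hx
      subst hx; exact H.one_mem
  | (n + 1) => by
      rw [pow_succ]
      intro x hx
      rw [Finset.coe_mul] at hx
      obtain ⟨a, ha, b, hb, rfl⟩ := hx
      exact H.mul_mem (pow_subset_subgroup hD n ha) (hD hb)

end Aux

/-- If the basic set containing `z` is contained in `⟨z⟩`, then `⟨z⟩` is an `A`-subgroup. -/
theorem stmt_0 (F : Type) [Field F] [CharZero F] (A : SchurRing F Dinf)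
    (C : Finset Dinf) (hC : C ∈ A.parts) (hzC : zz ∈ C)
    (hsub : (C : Set Dinf) ⊆ (Subgroup.zpowers zz : Subgroup Dinf)) :
    A.IsASet (Subgroup.zpowers zz : Subgroup Dinf) := by
  classical
  refine ⟨{E | E ∈ A.parts ∧ (E : Set Dinf) ⊆ (Subgroup.zpowers zz : Subgroup Dinf)},
    fun E hE => hE.1, ?_⟩
  ext x
  simp only [Set.mem_iUnion, Set.mem_setOf_eq, exists_prop]
  constructor
  · intro hx
    obtain ⟨k, hk⟩ := Subgroup.mem_zpowers_iff.mp (SetLike.mem_coe.mp hx)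
    have main : ∃ X : Finset Dinf, SchurGood A X ∧ x ∈ X ∧
        (X : Set Dinf) ⊆ (Subgroup.zpowers zz : Subgroup Dinf) := by
      rcases k with n | n
      · refine ⟨C ^ n, schurGood_pow A hC n, ?_, pow_subset_subgroup hsub n⟩
        have : zz ^ (Int.ofNat n) = zz ^ n := zpow_natCast zz n
        rw [← hk, this]
        exact Finset.pow_mem_pow hzC
      · set C' := C.image (·⁻¹) with hC'def
        have hC' : C' ∈ A.parts := A.inv_mem C hC
        have hzC' : zz⁻¹ ∈ C' := Finset.mem_image_of_mem _ hzC
        have hsub' : (C' : Set Dinf) ⊆ (Subgroup.zpowers zz : Subgroup Dinf) := by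
          intro y hy
          simp only [hC'def, Finset.coe_image, Set.mem_image] at hy
          obtain ⟨a, ha, rfl⟩ := hy
          exact (Subgroup.zpowers zz).inv_mem (hsub ha)
        refine ⟨C' ^ (n + 1), schurGood_pow A hC' (n + 1), ?_, pow_subset_subgroup hsub' (n + 1)⟩
        rw [← hk, zpow_negSucc, ← inv_pow]
        exact Finset.pow_mem_pow hzC'
    obtain ⟨X, hXg, hxX, hXZ⟩ := main
    obtain ⟨E, hE, hxE, hEX⟩ := hXg x hxX
    exact ⟨E, ⟨hE, (Finset.coe_subset.mpr hEX).trans hXZ⟩, hxE⟩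
  · rintro ⟨E, ⟨hE, hEZ⟩, hxE⟩
    exact hEZ hxE
end

section
/- Let A be a Schur ring over the infinite dihedral group D∞ and let C be the basic set of A containing z. If C contains an element of the form z^i s for some i ∈ ℤ, then there exist integers i ≠ j such that both z^i s and z^j s belong to C. -/
open scoped BigOperators

/-! ### Auxiliary material -/

section Aux

/-- View an element of `ZMod 0` as an integer (definitional identity). -/
def ZM0.toInt (m : ZMod 0) : ℤ := m

/-- View an integer as an element of `ZMod 0` (definitional identity). -/
def ZM0.ofInt (i : ℤ) : ZMod 0 := i

lemma zz_zpow (i : ℤ) : zz ^ i = DihedralGroup.r (ZM0.ofInt i) := by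
  induction i using Int.induction_on with
  | zero => rfl
  | succ k ih => rw [zpow_add_one, ih]; rw [zz, DihedralGroup.r_mul_r]; rfl
  | pred k ih =>
      rw [zpow_sub_one, ih]
      show DihedralGroup.r _ * (DihedralGroup.r 1)⁻¹ = _
      rw [show (DihedralGroup.r 1 : Dinf)⁻¹ = DihedralGroup.r (-1) from rfl,
        DihedralGroup.r_mul_r]
      rfl

lemma zpow_mul_ss (i : ℤ) : zz ^ i * ss = DihedralGroup.sr (-(ZM0.ofInt i)) := by
  rw [zz_zpow, ss, DihedralGroup.r_mul_sr, zero_sub]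

lemma exists_zpow_form (m : ZMod 0) : zz ^ (-(ZM0.toInt m)) * ss = DihedralGroup.sr m := by
  rw [zpow_mul_ss]
  exact congrArg DihedralGroup.sr ((neg_neg (ZM0.toInt m)) : -(-(ZM0.toInt m)) = ZM0.toInt m)

variable {F : Type} [Field F] [CharZero F] {G : Type} [Group G] [DecidableEq G]

lemma simple_apply (E : Finset G) (g : G) :
    (∑ a ∈ E, MonoidAlgebra.single a (1 : F)).coeff g = if g ∈ E then 1 else 0 := by
  classical
  rw [MonoidAlgebra.coeff_sum, Finsupp.finset_sum_apply]
  simp [Finsupp.single_apply, Finset.sum_ite_eq]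

lemma indicator_const (A : SchurRing F G) {E C : Finset G} (hE : E ∈ A.parts) (hC : C ∈ A.parts)
    {g g' : G} (hg : g ∈ C) (hg' : g' ∈ C) :
    ((if g ∈ E then (1:F) else 0) = if g' ∈ E then (1:F) else 0) := by
  rcases A.eq_or_disjoint E hE C hC with rfl | hd
  · simp [hg, hg']
  · have h1 : g ∉ E := fun hgE => (Finset.disjoint_left.mp hd hgE) hg
    have h2 : g' ∉ E := fun hgE => (Finset.disjoint_left.mp hd hgE) hg'
    simp [h1, h2]

lemma cube_coeff_const (A : SchurRing F G) {C : Finset G} (hC : C ∈ A.parts)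
    {g g' : G} (hg : g ∈ C) (hg' : g' ∈ C) :
    ((∑ a ∈ C, MonoidAlgebra.single a (1 : F)) * (∑ a ∈ C, MonoidAlgebra.single a (1 : F))
      * (∑ a ∈ C, MonoidAlgebra.single a (1 : F))).coeff g
    = ((∑ a ∈ C, MonoidAlgebra.single a (1 : F)) * (∑ a ∈ C, MonoidAlgebra.single a (1 : F))
      * (∑ a ∈ C, MonoidAlgebra.single a (1 : F))).coeff g' := by
  classical
  obtain ⟨S, hS, coef, heq⟩ := A.mul_mem C hC C hC
  rw [heq, Finset.sum_mul]
  rw [MonoidAlgebra.coeff_sum, Finsupp.finset_sum_apply, Finsupp.finset_sum_apply]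
  refine Finset.sum_congr rfl (fun E hE => ?_)
  rw [smul_mul_assoc, MonoidAlgebra.coeff_smul_apply, MonoidAlgebra.coeff_smul_apply]
  congr 1
  obtain ⟨S', hS', coef', heq'⟩ := A.mul_mem E (hS hE) C hC
  rw [heq', MonoidAlgebra.coeff_sum, Finsupp.finset_sum_apply, Finsupp.finset_sum_apply]
  refine Finset.sum_congr rfl (fun E' hE' => ?_)
  rw [MonoidAlgebra.coeff_smul_apply, MonoidAlgebra.coeff_smul_apply]
  congr 1
  rw [simple_apply, simple_apply]
  exact indicator_const A (hS' hE') hC hg hg'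

lemma triple_eq (C : Finset G) :
    ((∑ a ∈ C, MonoidAlgebra.single a (1 : F)) * (∑ a ∈ C, MonoidAlgebra.single a (1 : F))
      * (∑ a ∈ C, MonoidAlgebra.single a (1 : F)))
    = ∑ a ∈ C, ∑ b ∈ C, ∑ d ∈ C, MonoidAlgebra.single (a * b * d) (1 : F) := by
  rw [Finset.sum_mul_sum]
  rw [Finset.sum_mul]
  refine Finset.sum_congr rfl (fun a _ => ?_)
  rw [Finset.sum_mul]
  refine Finset.sum_congr rfl (fun b _ => ?_)
  rw [MonoidAlgebra.single_mul_single, Finset.mul_sum]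
  refine Finset.sum_congr rfl (fun d _ => ?_)
  rw [MonoidAlgebra.single_mul_single]
  simp

lemma triple_apply (C : Finset G) (g : G) :
    ((∑ a ∈ C, MonoidAlgebra.single a (1 : F)) * (∑ a ∈ C, MonoidAlgebra.single a (1 : F))
      * (∑ a ∈ C, MonoidAlgebra.single a (1 : F))).coeff g
    = ((∑ a ∈ C, ∑ b ∈ C, ∑ d ∈ C, (if a * b * d = g then 1 else 0 : ℕ) : ℕ) : F) := by
  rw [triple_eq]
  rw [MonoidAlgebra.coeff_sum, Finsupp.finset_sum_apply]
  push_cast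
  refine Finset.sum_congr rfl (fun a _ => ?_)
  rw [MonoidAlgebra.coeff_sum, Finsupp.finset_sum_apply]
  refine Finset.sum_congr rfl (fun b _ => ?_)
  rw [MonoidAlgebra.coeff_sum, Finsupp.finset_sum_apply]
  refine Finset.sum_congr rfl (fun d _ => ?_)
  rw [MonoidAlgebra.coeff_single, Finsupp.single_apply]

end Aux

section Counting

open DihedralGroup

lemma count_refl (P : Finset (ZMod 0)) (e : ZMod 0)
    (hsym : ∀ x ∈ P, -x ∈ P) :
    (∑ a ∈ insert (sr e) (P.image r), ∑ b ∈ insert (sr e) (P.image r),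
      ∑ d ∈ insert (sr e) (P.image r), if a * b * d = (sr e : Dinf) then 1 else 0 : ℕ)
    = 3 * P.card + 1 := by
  have hnot : (sr e : Dinf) ∉ P.image r := by simp
  have hinj : ∀ x ∈ P, ∀ y ∈ P, (r x : Dinf) = r y → x = y := by
    intro x _ y _ hxy; exact DihedralGroup.r.inj hxy
  simp only [Finset.sum_insert hnot, Finset.sum_image hinj]
  simp only [r_mul_r, r_mul_sr, sr_mul_r, sr_mul_sr]
  simp only [reduceCtorEq, if_false, Finset.sum_const_zero, sr.injEq, r.injEq, add_zero, zero_add]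
  have l2 : (∑ x ∈ P, ∑ y ∈ P, if e + x + y = e then 1 else 0 : ℕ) = P.card := by
    rw [Finset.sum_congr rfl (fun x hx => ?_), Finset.sum_const, smul_eq_mul, mul_one]
    have hiff : ∀ y : ZMod 0, (e + x + y = e) ↔ (y = -x) := by
      intro y; constructor <;> intro h <;> linear_combination h
    simp only [hiff]
    rw [Finset.sum_ite_eq' P (-x) (fun _ => 1)]
    simp [hsym x hx]
  have l3 : (∑ x ∈ P, ((∑ y ∈ P, if e - x + y = e then 1 else 0)
      + ∑ y ∈ P, if e - (x + y) = e then 1 else 0) : ℕ) = P.card * 2 := by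
    rw [Finset.sum_congr rfl (fun x hx => ?_), Finset.sum_const, smul_eq_mul]
    have hiff1 : ∀ y : ZMod 0, (e - x + y = e) ↔ (y = x) := by
      intro y; constructor <;> intro h <;> linear_combination h
    have hiff2 : ∀ y : ZMod 0, (e - (x + y) = e) ↔ (y = -x) := by
      intro y; constructor <;> intro h <;> linear_combination -h
    simp only [hiff1, hiff2]
    rw [Finset.sum_ite_eq' P x (fun _ => 1), Finset.sum_ite_eq' P (-x) (fun _ => 1)]
    simp [hsym x hx, hx]
  rw [l2, l3]
  have he : e - (e - e) = e := by ring
  rw [if_pos he]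
  omega

lemma count_rot (P : Finset (ZMod 0)) (e : ZMod 0)
    (hsym : ∀ x ∈ P, -x ∈ P) (h1 : (1 : ZMod 0) ∈ P) :
    (∑ a ∈ insert (sr e) (P.image r), ∑ b ∈ insert (sr e) (P.image r),
      ∑ d ∈ insert (sr e) (P.image r), if a * b * d = (r 1 : Dinf) then 1 else 0 : ℕ)
    = (∑ x ∈ P, ∑ y ∈ P, ∑ w ∈ P, if x + y + w = 1 then 1 else 0) + 3 := by
  have hnot : (sr e : Dinf) ∉ P.image r := by simp
  have hinj : ∀ x ∈ P, ∀ y ∈ P, (r x : Dinf) = r y → x = y := by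
    intro x _ y _ hxy; exact DihedralGroup.r.inj hxy
  simp only [Finset.sum_insert hnot, Finset.sum_image hinj]
  simp only [r_mul_r, r_mul_sr, sr_mul_r, sr_mul_sr]
  simp only [reduceCtorEq, if_false, Finset.sum_const_zero, sr.injEq, r.injEq, add_zero, zero_add]
  have hiffA : ∀ x : ZMod 0, (e - e + x = 1) ↔ (x = 1) := by
    intro x; constructor <;> intro h <;> linear_combination h
  have hiffB : ∀ x : ZMod 0, (e - (e + x) = 1) ↔ (x = -1) := by
    intro x; constructor <;> intro h <;> linear_combination -h
  have hiffC : ∀ x : ZMod 0, (e - (e - x) = 1) ↔ (x = 1) := by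
    intro x; constructor <;> intro h <;> linear_combination h
  simp only [hiffA, hiffB, hiffC, Finset.sum_add_distrib]
  rw [Finset.sum_ite_eq' P (1:ZMod 0) (fun _ => 1), Finset.sum_ite_eq' P (-1:ZMod 0) (fun _ => 1)]
  have hm1 : (-1 : ZMod 0) ∈ P := hsym 1 h1
  rw [if_pos h1, if_pos hm1]
  omega

end Counting
set_option maxHeartbeats 1000000 in
lemma core_arith (P : Finset (ZMod 0))
    (hsym : ∀ x ∈ P, -x ∈ P) (h1 : (1 : ZMod 0) ∈ P)
    (heq : (∑ x ∈ P, ∑ y ∈ P, ∑ w ∈ P, if x + y + w = 1 then 1 else 0 : ℕ) + 3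
      = 3 * P.card + 1) : False := by
  classical
  set n := P.card with hn
  set Tri : Finset ((ZMod 0 × ZMod 0) × ZMod 0) :=
    ((P ×ˢ P) ×ˢ P).filter (fun q => q.1.1 + q.1.2 + q.2 = 1) with hTri
  have hrc : (∑ x ∈ P, ∑ y ∈ P, ∑ w ∈ P, if x + y + w = 1 then 1 else 0 : ℕ) = Tri.card := by
    rw [hTri, Finset.card_filter, Finset.sum_product, Finset.sum_product]
  set Deg : Finset ((ZMod 0 × ZMod 0) × ZMod 0) :=
    Tri.filter (fun q => q.1.1 + q.1.2 = 0 ∨ q.1.2 + q.2 = 0 ∨ q.1.1 + q.2 = 0) with hDegDef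
  set Ndg : Finset ((ZMod 0 × ZMod 0) × ZMod 0) :=
    Tri.filter (fun q => ¬(q.1.1 + q.1.2 = 0 ∨ q.1.2 + q.2 = 0 ∨ q.1.1 + q.2 = 0)) with hNdgDef
  have hsplit : Deg.card + Ndg.card = Tri.card :=
    Finset.card_filter_add_card_filter_not _
  set X1 : Finset ((ZMod 0 × ZMod 0) × ZMod 0) := P.image (fun a => ((a, -a), (1 : ZMod 0))) with hX1
  set X2 : Finset ((ZMod 0 × ZMod 0) × ZMod 0) := P.image (fun b => (((1 : ZMod 0), b), -b)) with hX2
  set X3 : Finset ((ZMod 0 × ZMod 0) × ZMod 0) := P.image (fun a => ((a, (1 : ZMod 0)), -a)) with hX3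
  have A1 : ∀ a b c : ℤ, a + b + c = 1 → a + b = 0 → -a = b := by intros; omega
  have A2 : ∀ a b c : ℤ, a + b + c = 1 → a + b = 0 → (1:ℤ) = c := by intros; omega
  have B1 : ∀ a b c : ℤ, a + b + c = 1 → b + c = 0 → (1:ℤ) = a := by intros; omega
  have B2 : ∀ a b c : ℤ, a + b + c = 1 → b + c = 0 → -b = c := by intros; omega
  have C1 : ∀ a b c : ℤ, a + b + c = 1 → a + c = 0 → (1:ℤ) = b := by intros; omega
  have C2 : ∀ a b c : ℤ, a + b + c = 1 → a + c = 0 → -a = c := by intros; omega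
  have D1 : ∀ a : ℤ, a + -a + 1 = 1 := by intros; omega
  have D2 : ∀ a : ℤ, a + -a = 0 := by intros; omega
  have D3 : ∀ b : ℤ, 1 + b + -b = 1 := by intros; omega
  have D5 : ∀ a : ℤ, a + 1 + -a = 1 := by intros; omega
  have hDeg : Deg = X1 ∪ (X2 ∪ X3) := by
    rw [hDegDef, hTri, Finset.filter_filter]
    ext ⟨⟨x, y⟩, w⟩
    simp only [Finset.mem_filter, Finset.mem_product, Finset.mem_union, Finset.mem_image,
      hX1, hX2, hX3, Prod.mk.injEq]
    constructor
    · rintro ⟨⟨⟨hx, hy⟩, hw⟩, hsum, hd | hd | hd⟩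
      · exact Or.inl ⟨x, hx, ⟨rfl, A1 x y w hsum hd⟩, A2 x y w hsum hd⟩
      · exact Or.inr (Or.inl ⟨y, hy, ⟨B1 x y w hsum hd, rfl⟩, B2 x y w hsum hd⟩)
      · exact Or.inr (Or.inr ⟨x, hx, ⟨rfl, C1 x y w hsum hd⟩, C2 x y w hsum hd⟩)
    · rintro (⟨a, ha, ⟨rfl, rfl⟩, rfl⟩ | ⟨a, ha, ⟨rfl, rfl⟩, rfl⟩ | ⟨a, ha, ⟨rfl, rfl⟩, rfl⟩)
      · exact ⟨⟨⟨ha, hsym a ha⟩, h1⟩, D1 a, Or.inl (D2 a)⟩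
      · exact ⟨⟨⟨h1, ha⟩, hsym a ha⟩, D3 a, Or.inr (Or.inl (D2 a))⟩
      · exact ⟨⟨⟨ha, h1⟩, hsym a ha⟩, D5 a, Or.inr (Or.inr (D2 a))⟩
  -- cards of images
  have cX1 : X1.card = n := Finset.card_image_of_injective P (by
    intro a b hab; simp only [Prod.mk.injEq] at hab; exact hab.1.1)
  have cX2 : X2.card = n := Finset.card_image_of_injective P (by
    intro a b hab; simp only [Prod.mk.injEq] at hab; exact hab.1.2)
  have cX3 : X3.card = n := Finset.card_image_of_injective P (by
    intro a b hab; simp only [Prod.mk.injEq] at hab; exact hab.1.1)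
  have hm1 : (-1 : ZMod 0) ∈ P := hsym 1 h1
  have hi23 : X2 ∩ X3 = {(((1:ZMod 0), (1:ZMod 0)), (-1 : ZMod 0))} := by
    ext ⟨⟨x, y⟩, w⟩
    simp only [Finset.mem_inter, Finset.mem_image, hX2, hX3, Prod.mk.injEq,
      Finset.mem_singleton]
    constructor
    · rintro ⟨⟨b, hb, ⟨rfl, rfl⟩, rfl⟩, ⟨a, ha, ⟨rfl, h2⟩, h3⟩⟩
      exact ⟨⟨rfl, h2.symm⟩, by rw [← h2]⟩
    · rintro ⟨⟨rfl, rfl⟩, rfl⟩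
      exact ⟨⟨1, h1, ⟨rfl, rfl⟩, rfl⟩, ⟨1, h1, ⟨rfl, rfl⟩, rfl⟩⟩
  have hi123 : X1 ∩ (X2 ∪ X3) = {(((1:ZMod 0), (-1:ZMod 0)), (1 : ZMod 0)),
      (((-1:ZMod 0), (1:ZMod 0)), (1 : ZMod 0))} := by
    ext ⟨⟨x, y⟩, w⟩
    simp only [Finset.mem_inter, Finset.mem_union, Finset.mem_image, hX1, hX2, hX3,
      Prod.mk.injEq, Finset.mem_insert, Finset.mem_singleton]
    constructor
    · rintro ⟨⟨a, ha, ⟨rfl, rfl⟩, rfl⟩, ⟨b, hb, ⟨h2, h3⟩, h4⟩ | ⟨b, hb, ⟨h2, h3⟩, h4⟩⟩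
      · exact Or.inl ⟨⟨h2.symm, by rw [← h2]⟩, rfl⟩
      · refine Or.inr ⟨⟨?_, ?_⟩, rfl⟩
        · exact (by intros a b h h'; omega : ∀ a b : ℤ, -a = b → 1 = b → a = -1) a (-a) rfl
            (by exact h3)
        · exact h3.symm
    · have e : -(-1 : ZMod 0) = 1 := neg_neg (1:ℤ)
      rintro (⟨⟨rfl, rfl⟩, rfl⟩ | ⟨⟨rfl, rfl⟩, rfl⟩)
      · exact ⟨⟨1, h1, ⟨rfl, rfl⟩, rfl⟩, Or.inl ⟨-1, hm1, ⟨rfl, rfl⟩, e⟩⟩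
      · exact ⟨⟨-1, hm1, ⟨rfl, e⟩, rfl⟩, Or.inr ⟨-1, hm1, ⟨rfl, rfl⟩, e⟩⟩
  have cpair : ({(((1:ZMod 0), (-1:ZMod 0)), (1 : ZMod 0)),
      (((-1:ZMod 0), (1:ZMod 0)), (1 : ZMod 0))} : Finset ((ZMod 0 × ZMod 0) × ZMod 0)).card = 2 := by
    rw [Finset.card_insert_of_notMem, Finset.card_singleton]
    simp only [Finset.mem_singleton, Prod.mk.injEq]
    intro hcon
    exact absurd hcon.1.1 (by exact (by omega : (1:ℤ) ≠ -1))
  have cu23 : (X2 ∪ X3).card + 1 = n + n := by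
    have hh := Finset.card_union_add_card_inter X2 X3
    rw [hi23, Finset.card_singleton, cX2, cX3] at hh
    exact hh
  have cD : Deg.card + 2 = n + (X2 ∪ X3).card := by
    have hh := Finset.card_union_add_card_inter X1 (X2 ∪ X3)
    rw [hi123, cX1, cpair, ← hDeg] at hh
    exact hh
  have hone : Ndg.card = 1 := by omega
  obtain ⟨⟨⟨x, y⟩, w⟩, hq⟩ := Finset.card_eq_one.mp hone
  have hchar : ∀ u v t : ZMod 0, ((((u,v),t) ∈ Ndg) ↔
      (((u ∈ P ∧ v ∈ P) ∧ t ∈ P) ∧ u + v + t = 1 ∧ ¬(u + v = 0 ∨ v + t = 0 ∨ u + t = 0))) := by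
    intro u v t
    rw [hNdgDef, hTri, Finset.filter_filter]
    simp only [Finset.mem_filter, Finset.mem_product]
  have hself : ((x,y),w) ∈ Ndg := by rw [hq]; exact Finset.mem_singleton_self _
  obtain ⟨⟨⟨hx, hy⟩, hw⟩, hsum, hnd⟩ := (hchar x y w).mp hself
  have hswap1 : ((y,x),w) ∈ Ndg := by
    refine (hchar y x w).mpr ⟨⟨⟨hy, hx⟩, hw⟩,
      (by intros a b c h; omega : ∀ a b c : ℤ, a + b + c = 1 → b + a + c = 1) x y w hsum, ?_⟩
    rintro (hc | hc | hc)
    · exact hnd (Or.inl ((by intros a b h; omega : ∀ a b : ℤ, b + a = 0 → a + b = 0) x y hc))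
    · exact hnd (Or.inr (Or.inr hc))
    · exact hnd (Or.inr (Or.inl hc))
  have hswap2 : ((x,w),y) ∈ Ndg := by
    refine (hchar x w y).mpr ⟨⟨⟨hx, hw⟩, hy⟩,
      (by intros a b c h; omega : ∀ a b c : ℤ, a + b + c = 1 → a + c + b = 1) x y w hsum, ?_⟩
    rintro (hc | hc | hc)
    · exact hnd (Or.inr (Or.inr hc))
    · exact hnd (Or.inr (Or.inl ((by intros a b h; omega : ∀ a b : ℤ, b + a = 0 → a + b = 0) y w hc)))
    · exact hnd (Or.inl hc)
  rw [hq] at hswap1 hswap2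
  simp only [Finset.mem_singleton, Prod.mk.injEq] at hswap1 hswap2
  have hyx : y = x := hswap1.1.1
  have hwy : w = y := hswap2.1.2
  rw [hwy, hyx] at hsum
  exact (by intro a h; omega : ∀ a : ℤ, a + a + a = 1 → False) x hsum


/-- If the basic set containing `z` contains an element of the form `z^i s`, then it contains
two such elements `z^i s`, `z^j s` with `i ≠ j`. -/
theorem stmt_1 (F : Type) [Field F] [CharZero F] (A : SchurRing F Dinf)
    (C : Finset Dinf) (hC : C ∈ A.parts) (hzC : zz ∈ C)
    (h : ∃ i : ℤ, zz ^ i * ss ∈ C) :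
    ∃ i j : ℤ, i ≠ j ∧ zz ^ i * ss ∈ C ∧ zz ^ j * ss ∈ C := by
  classical
  by_contra hcon
  obtain ⟨i₀, hi₀⟩ := h
  set e : ZMod 0 := -(ZM0.ofInt i₀) with hedef
  have hse : DihedralGroup.sr e ∈ C := by
    rw [hedef, ← zpow_mul_ss]; exact hi₀
  have huniq : ∀ m : ZMod 0, DihedralGroup.sr m ∈ C → m = e := by
    intro m hm
    by_contra hne
    refine hcon ⟨-(ZM0.toInt m), -(ZM0.toInt e), ?_, ?_, ?_⟩
    · intro hh
      exact hne ((by omega : ZM0.toInt m = ZM0.toInt e) : m = e)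
    · rw [exists_zpow_form]; exact hm
    · rw [exists_zpow_form]; exact hse
  have hCinv : C.image (·⁻¹) = C := by
    have hmem : DihedralGroup.sr e ∈ C.image (·⁻¹) :=
      Finset.mem_image.mpr ⟨DihedralGroup.sr e, hse, rfl⟩
    rcases A.eq_or_disjoint _ (A.inv_mem C hC) C hC with heq | hd
    · exact heq
    · exact absurd hse (Finset.disjoint_left.mp hd hmem)
  have hinvmem : ∀ g ∈ C, g⁻¹ ∈ C := by
    intro g hg
    rw [← hCinv]
    exact Finset.mem_image.mpr ⟨g, hg, rfl⟩
  have hPmem : ∀ x : ZMod 0,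
      x ∈ (C.erase (DihedralGroup.sr e)).image
        (fun a => match a with | .r x => x | .sr x => x) ↔ DihedralGroup.r x ∈ C := by
    intro x
    constructor
    · intro hx
      obtain ⟨b, hb, hbx⟩ := Finset.mem_image.mp hx
      obtain ⟨hbne, hbC⟩ := Finset.mem_erase.mp hb
      cases b with
      | r y =>
          have hyx : y = x := hbx
          rw [← hyx]; exact hbC
      | sr y =>
          exact absurd (congrArg DihedralGroup.sr (huniq y hbC)) hbne
    · intro hx
      exact Finset.mem_image.mpr ⟨DihedralGroup.r x,
        Finset.mem_erase.mpr ⟨by simp, hx⟩, rfl⟩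
  set P : Finset (ZMod 0) := (C.erase (DihedralGroup.sr e)).image
    (fun a => match a with | .r x => x | .sr x => x) with hPdef
  have hsymP : ∀ x ∈ P, -x ∈ P := by
    intro x hx
    rw [hPdef, hPmem] at hx ⊢
    have hcInv := hinvmem _ hx
    rwa [show (DihedralGroup.r x : Dinf)⁻¹ = DihedralGroup.r (-x) from rfl] at hcInv
  have h1P : (1 : ZMod 0) ∈ P := by rw [hPdef, hPmem]; exact hzC
  have hCeq : C = insert (DihedralGroup.sr e) (P.image DihedralGroup.r) := by
    ext a
    rw [Finset.mem_insert]
    cases a with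
    | r x =>
        constructor
        · intro ha
          exact Or.inr (Finset.mem_image.mpr ⟨x, by rw [hPdef, hPmem]; exact ha, rfl⟩)
        · rintro (hh | hh)
          · exact absurd hh (by simp)
          · obtain ⟨y, hy, hyx⟩ := Finset.mem_image.mp hh
            obtain rfl : y = x := DihedralGroup.r.inj hyx
            rw [hPdef, hPmem] at hy
            exact hy
    | sr y =>
        constructor
        · intro ha
          exact Or.inl (congrArg DihedralGroup.sr (huniq y ha))
        · rintro (hh | hh)
          · rw [hh]; exact hse
          · obtain ⟨x', _, hxx⟩ := Finset.mem_image.mp hh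
            exact absurd hxx (by simp)
  have hcoeff := cube_coeff_const (F := F) A hC hzC hse
  rw [triple_apply, triple_apply] at hcoeff
  have hnat := Nat.cast_injective hcoeff
  rw [hCeq] at hnat
  rw [show zz = DihedralGroup.r 1 from rfl] at hnat
  rw [count_rot P e hsymP h1P, count_refl P e hsymP] at hnat
  exact core_arith P hsymP h1P (by omega)
end

section
/- For every integer i, the partition of the infinite dihedral group D∞ whose parts are the sets {z^j s, z^{i−j} s} for j ∈ ℤ and the sets {z^j, z^{−j}} for j ∈ ℤ is the partition into basic sets of a Schur ring over D∞. -/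
open scoped BigOperators

open DihedralGroup

open DihedralGroup

lemma z0_add (a b : ℤ) : @HAdd.hAdd (ZMod 0) (ZMod 0) (ZMod 0) _ a b = (a + b : ℤ) := rfl
lemma z0_sub (a b : ℤ) : @HSub.hSub (ZMod 0) (ZMod 0) (ZMod 0) _ a b = (a - b : ℤ) := rfl
lemma z0_neg (a : ℤ) : @Neg.neg (ZMod 0) _ a = (-a : ℤ) := rfl

def phiF (i : ℤ) : Dinf → Dinf
  | r j => r (-(show ℤ from j))
  | sr a => sr (-i - (show ℤ from a))

@[simp] lemma phiF_r (i j : ℤ) : phiF i (r j) = r (-j) := rfl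
@[simp] lemma phiF_sr (i a : ℤ) : phiF i (sr a) = sr (-i - a) := rfl

lemma dih_cases (g : Dinf) : (∃ j : ℤ, g = r j) ∨ (∃ a : ℤ, g = sr a) := by
  rcases g with j | a
  · exact Or.inl ⟨j, rfl⟩
  · exact Or.inr ⟨a, rfl⟩

lemma phiF_mul (i : ℤ) (x y : Dinf) : phiF i (x * y) = phiF i x * phiF i y := by
  rcases dih_cases x with ⟨a, rfl⟩ | ⟨a, rfl⟩ <;> rcases dih_cases y with ⟨b, rfl⟩ | ⟨b, rfl⟩ <;>
    simp only [r_mul_r, r_mul_sr, sr_mul_r, sr_mul_sr, phiF_r, phiF_sr] <;>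
    first
      | exact congrArg (α := ℤ) (r (n := 0)) (by simp only [z0_add, z0_sub, z0_neg] <;> ring)
      | exact congrArg (α := ℤ) (sr (n := 0)) (by simp only [z0_add, z0_sub, z0_neg] <;> ring)

def phiM (i : ℤ) : Dinf →* Dinf where
  toFun := phiF i
  map_one' := by show phiF i (r (0:ℤ)) = 1; rw [phiF_r, neg_zero, one_def]; rfl
  map_mul' := phiF_mul i

@[simp] lemma phiM_r (i j : ℤ) : phiM i (r j) = r (-j) := rfl
@[simp] lemma phiM_sr (i a : ℤ) : phiM i (sr a) = sr (-i - a) := rfl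

lemma phi_phi (i : ℤ) (g : Dinf) : phiM i (phiM i g) = g := by
  rcases dih_cases g with ⟨a, rfl⟩ | ⟨a, rfl⟩
  · rw [phiM_r, phiM_r, neg_neg]
  · rw [phiM_sr, phiM_sr]; exact congrArg (α := ℤ) (sr (n := 0)) (by ring)

lemma r_inv (a : ℤ) : (r a : Dinf)⁻¹ = r (-a) :=
  inv_eq_of_mul_eq_one_right (by
    erw [r_mul_r]
    show (r (a + -a : ℤ) : Dinf) = 1
    rw [add_neg_cancel]; exact (one_def).symm)

lemma zz_zpow_s4 (j : ℤ) : zz ^ j = r j := by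
  induction j using Int.induction_on with
  | zero => rw [zpow_zero, one_def]; rfl
  | succ k ih =>
      rw [zpow_add_one, ih]
      show (r (k:ℤ) * r (1:ℤ) : Dinf) = _
      exact r_mul_r _ _
  | pred k ih =>
      rw [zpow_sub_one, ih]
      show (r (-(k:ℤ)) * (r (1:ℤ))⁻¹ : Dinf) = _
      rw [r_inv]; erw [r_mul_r]; exact congrArg (α := ℤ) (r (n := 0)) (by simp only [z0_add, z0_sub, z0_neg] <;> ring)

lemma zz_ss (j : ℤ) : zz ^ j * ss = sr (-j) := by
  rw [zz_zpow_s4]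
  show (r j * sr (0:ℤ) : Dinf) = _
  erw [r_mul_sr]; exact congrArg (α := ℤ) (sr (n := 0)) (by simp only [z0_add, z0_sub, z0_neg] <;> ring)

noncomputable section
open Finset MonoidAlgebra

lemma phi_inj (i : ℤ) : Function.Injective (phiM i) :=
  Function.LeftInverse.injective (phi_phi i)

/-- orbit of `g` under the involution `phiM i` -/
def orb (i : ℤ) (g : Dinf) : Finset Dinf := {g, phiM i g}

lemma mem_orb_self (i : ℤ) (g : Dinf) : g ∈ orb i g := by simp [orb]

lemma orb_eq_of_mem {i : ℤ} {x g : Dinf} (hx : x ∈ orb i g) : orb i x = orb i g := by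
  rcases Finset.mem_insert.1 hx with h | h
  · rw [h]
  · rw [Finset.mem_singleton] at h
    subst h
    unfold orb
    rw [phi_phi, Finset.pair_comm]

lemma orb_image_inv (i : ℤ) (g : Dinf) : (orb i g).image (·⁻¹) = orb i g⁻¹ := by
  unfold orb
  rw [Finset.image_insert, Finset.image_singleton, map_inv]

lemma orb_image_phi (i : ℤ) (g : Dinf) : (orb i g).image (phiM i) = orb i g := by
  unfold orb
  rw [Finset.image_insert, Finset.image_singleton, phi_phi, Finset.pair_comm]

variable (F : Type) [Field F] [CharZero F]

lemma reconstruct (i : ℤ) (f : MonoidAlgebra F Dinf) (hf : ∀ x, f.coeff (phiM i x) = f.coeff x) :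
    ∃ S : Finset (Finset Dinf), (↑S : Set (Finset Dinf)) ⊆ Set.range (orb i) ∧
      ∃ coef : Finset Dinf → F,
        f = ∑ E ∈ S, coef E • ∑ g ∈ E, MonoidAlgebra.single g (1 : F) := by
  classical
  refine ⟨f.coeff.support.image (orb i), ?_, fun E => if h : E.Nonempty then f.coeff h.choose else 0, ?_⟩
  · intro E hE
    rcases Finset.mem_image.1 (by exact_mod_cast hE) with ⟨g, _, rfl⟩
    exact ⟨g, rfl⟩
  · ext x
    rw [coeff_sum, Finset.sum_apply']
    have inner : ∀ E : Finset Dinf,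
        (((if h : E.Nonempty then f.coeff h.choose else 0) • ∑ g ∈ E, single g (1:F)) : MonoidAlgebra F Dinf).coeff x
        = if x ∈ E then (if h : E.Nonempty then f.coeff h.choose else 0) else 0 := by
      intro E
      rw [coeff_smul, Finsupp.smul_apply, coeff_sum, Finset.sum_apply']
      simp only [coeff_single, Finsupp.single_apply]
      rw [Finset.sum_ite_eq' E x (fun _ => (1:F))]
      by_cases h : x ∈ E <;> simp [h]
    simp only [inner]
    rw [← Finset.sum_filter]
    by_cases hx : f.coeff x = 0
    · have : (f.coeff.support.image (orb i)).filter (fun E => x ∈ E) = ∅ := by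
        rw [Finset.filter_eq_empty_iff]
        intro E hE
        rcases Finset.mem_image.1 hE with ⟨g, hg, rfl⟩
        intro hxg
        rcases Finset.mem_insert.1 hxg with h | h
        · exact Finsupp.mem_support_iff.1 hg (h ▸ hx)
        · rw [Finset.mem_singleton] at h
          apply Finsupp.mem_support_iff.1 hg
          rw [← hf g, ← h, hx]
      rw [this, Finset.sum_empty, hx]
    · have hfilter : (f.coeff.support.image (orb i)).filter (fun E => x ∈ E) = {orb i x} := by
        ext E
        rw [Finset.mem_filter, Finset.mem_singleton]
        constructor
        · rintro ⟨hE, hxE⟩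
          rcases Finset.mem_image.1 hE with ⟨g, _, rfl⟩
          exact (orb_eq_of_mem hxE).symm
        · rintro rfl
          exact ⟨Finset.mem_image_of_mem _ (Finsupp.mem_support_iff.2 hx), mem_orb_self i x⟩
      rw [hfilter, Finset.sum_singleton]
      have hne : (orb i x).Nonempty := ⟨x, mem_orb_self i x⟩
      rw [dif_pos hne]
      have hc := hne.choose_spec
      rcases Finset.mem_insert.1 hc with h | h
      · rw [h]
      · rw [Finset.mem_singleton] at h
        rw [h, hf]

lemma simple_phi_invariant (i : ℤ) (g : Dinf) :
    MonoidAlgebra.mapDomainRingHom F (phiM i) (∑ g' ∈ orb i g, single g' (1:F))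
      = ∑ g' ∈ orb i g, single g' (1:F) := by
  rw [map_sum]
  simp only [mapDomainRingHom_apply, AddMonoidHom.toFun_eq_coe,
    Finsupp.mapDomain.addMonoidHom_apply, Finsupp.mapDomain_single, MonoidAlgebra.mapDomain_single]
  rw [← Finset.sum_image (f := fun g' => single g' (1:F))
        (g := phiM i) (fun a _ b _ h => phi_inj i h), orb_image_phi]

lemma prod_constant (i : ℤ) (c d : Dinf) (x : Dinf) :
    ((∑ g ∈ orb i c, single g (1:F)) * (∑ g ∈ orb i d, single g (1:F))).coeff (phiM i x)
    = ((∑ g ∈ orb i c, single g (1:F)) * (∑ g ∈ orb i d, single g (1:F))).coeff x := by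
  set f := (∑ g ∈ orb i c, single g (1:F)) * (∑ g ∈ orb i d, single g (1:F)) with hfdef
  have hstab : MonoidAlgebra.mapDomainRingHom F (phiM i) f = f := by
    rw [hfdef, map_mul, simple_phi_invariant, simple_phi_invariant]
  conv_lhs => rw [← hstab]
  simp only [mapDomainRingHom_apply, AddMonoidHom.toFun_eq_coe,
    Finsupp.mapDomain.addMonoidHom_apply]
  exact Finsupp.mapDomain_apply (phi_inj i) _ _

end

/-- For every integer `i`, the partition of `D∞` into the sets `{z^j s, z^(i-j) s}` and
`{z^j, z^(-j)}` is the partition into basic sets of a Schur ring over `D∞`. -/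
theorem stmt_4 (F : Type) [Field F] [CharZero F] (i : ℤ) :
    ∃ A : SchurRing F Dinf, A.parts =
      {C : Finset Dinf | ∃ j : ℤ, C = {zz ^ j * ss, zz ^ (i - j) * ss}} ∪
      {C : Finset Dinf | ∃ j : ℤ, C = {zz ^ j, zz ^ (-j)}} := by
  classical
  refine ⟨⟨Set.range (orb i), ?_, ?_, ?_, ?_, ?_, ?_⟩, ?_⟩
  · rintro C ⟨g, rfl⟩
    exact ⟨g, mem_orb_self i g⟩
  · exact fun g => ⟨orb i g, ⟨g, rfl⟩, mem_orb_self i g⟩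
  · rintro C ⟨c, rfl⟩ D ⟨d, rfl⟩
    by_cases h : Disjoint (orb i c) (orb i d)
    · exact Or.inr h
    · rcases Finset.not_disjoint_iff.1 h with ⟨x, hxc, hxd⟩
      exact Or.inl ((orb_eq_of_mem hxc).symm.trans (orb_eq_of_mem hxd))
  · refine ⟨1, ?_⟩
    unfold orb
    rw [map_one]
    simp
  · rintro C ⟨g, rfl⟩
    rw [orb_image_inv]
    exact ⟨g⁻¹, rfl⟩
  · rintro C ⟨c, rfl⟩ D ⟨d, rfl⟩
    exact reconstruct F i _ (prod_constant F i c d)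
  · ext C
    simp only [Set.mem_range, Set.mem_union, Set.mem_setOf_eq]
    constructor
    · rintro ⟨g, rfl⟩
      rcases dih_cases g with ⟨j, rfl⟩ | ⟨a, rfl⟩
      · right
        refine ⟨j, ?_⟩
        rw [zz_zpow_s4, zz_zpow_s4]
        unfold orb
        rw [phiM_r]
      · left
        refine ⟨-a, ?_⟩
        have e1 : (zz ^ (-a) * ss : Dinf) = sr a := by
          rw [zz_ss]; exact congrArg (α := ℤ) (sr (n := 0)) (by ring)
        have e2 : (zz ^ (i - -a) * ss : Dinf) = sr (-i - a) := by
          rw [zz_ss]; exact congrArg (α := ℤ) (sr (n := 0)) (by ring)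
        rw [e1, e2]
        rfl
    · rintro (⟨j, rfl⟩ | ⟨j, rfl⟩)
      · refine ⟨sr (-j), ?_⟩
        have e2 : (zz ^ (i - j) * ss : Dinf) = sr (-i - -j) := by
          rw [zz_ss]; exact congrArg (α := ℤ) (sr (n := 0)) (by ring)
        rw [zz_ss, e2]
        rfl
      · refine ⟨r j, ?_⟩
        unfold orb
        rw [phiM_r, zz_zpow_s4, zz_zpow_s4]
end

section
/- The partition of the infinite dihedral group D∞ whose parts are the sets {z^i, z^{−i}, z^i s, z^{−i} s} for odd positive integers i, the sets {z^i, z^{−i}} for even integers i ≥ 0, and the sets {z^i s, z^{−i} s} for even integers i ≥ 0, is the partition into basic sets of a Schur ring over D∞. -/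
open scoped BigOperators

set_option linter.unusedTactic false
set_option linter.unreachableTactic false
set_option linter.unusedSectionVars false

namespace Stmt12

def rr (i : ℤ) : Dinf := DihedralGroup.r i
def sr' (i : ℤ) : Dinf := DihedralGroup.sr i

@[simp] lemma rr_mul_rr (i j : ℤ) : rr i * rr j = rr (i + j) := rfl
@[simp] lemma rr_mul_sr' (i j : ℤ) : rr i * sr' j = sr' (j - i) := rfl
@[simp] lemma sr'_mul_rr (i j : ℤ) : sr' i * rr j = sr' (i + j) := rfl
@[simp] lemma sr'_mul_sr' (i j : ℤ) : sr' i * sr' j = rr (j - i) := rfl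
@[simp] lemma rr_inv (i : ℤ) : (rr i)⁻¹ = rr (-i) := rfl
@[simp] lemma sr'_inv (i : ℤ) : (sr' i)⁻¹ = sr' i := rfl
@[simp] lemma rr_inj {i j : ℤ} : rr i = rr j ↔ i = j :=
  ⟨fun h => by injection h, fun h => by rw [h]⟩
@[simp] lemma sr'_inj {i j : ℤ} : sr' i = sr' j ↔ i = j :=
  ⟨fun h => by injection h, fun h => by rw [h]⟩
@[simp] lemma rr_ne_sr' (i j : ℤ) : rr i ≠ sr' j := by intro h; injection h
@[simp] lemma sr'_ne_rr (i j : ℤ) : sr' i ≠ rr j := by intro h; injection h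
@[simp] lemma one_eq_rr : (1 : Dinf) = rr 0 := rfl
@[simp] lemma zz_zpow (i : ℤ) : zz ^ i = rr i := by
  induction i using Int.induction_on with
  | zero => rfl
  | succ k ih => rw [zpow_add, ih]; rfl
  | pred k ih => rw [sub_eq_add_neg, zpow_add, ih]; rfl
@[simp] lemma mul_ss (i : ℤ) : rr i * ss = sr' (-i) := by
  show rr i * sr' 0 = _; rw [rr_mul_sr']; norm_num

lemma cases_g (g : Dinf) : (∃ i : ℤ, g = rr i) ∨ (∃ i : ℤ, g = sr' i) := by
  cases g with
  | r j => exact Or.inl ⟨j, rfl⟩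
  | sr j => exact Or.inr ⟨j, rfl⟩

def partR (i : ℤ) : Finset Dinf := {rr i, rr (-i)}
def partS (i : ℤ) : Finset Dinf := {sr' i, sr' (-i)}
def partT (i : ℤ) : Finset Dinf := {rr i, rr (-i), sr' i, sr' (-i)}

lemma setR (i : ℤ) : ({zz ^ i, zz ^ (-i)} : Finset Dinf) = partR i := by
  simp [partR]
lemma setS (i : ℤ) : ({zz ^ i * ss, zz ^ (-i) * ss} : Finset Dinf) = partS i := by
  simp [partS, Finset.pair_comm]
lemma setT (i : ℤ) :
    ({zz ^ i, zz ^ (-i), zz ^ i * ss, zz ^ (-i) * ss} : Finset Dinf) = partT i := by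
  simp only [zz_zpow, mul_ss, neg_neg, partT]
  ext g; simp; tauto

def cl : Dinf → ℕ × ℕ := fun g =>
  match g with
  | .r j => clr j
  | .sr j => cls j
where
  clr (j : ℤ) : ℕ × ℕ := (j.natAbs, if j % 2 = 0 then 0 else 2)
  cls (j : ℤ) : ℕ × ℕ := (j.natAbs, if j % 2 = 0 then 1 else 2)

lemma cl_rr (j : ℤ) : cl (rr j) = (j.natAbs, if j % 2 = 0 then 0 else 2) := rfl
lemma cl_sr' (j : ℤ) : cl (sr' j) = (j.natAbs, if j % 2 = 0 then 1 else 2) := rfl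

lemma fiberR {i : ℤ} (hi : Even i) (g : Dinf) : g ∈ partR i ↔ cl g = (i.natAbs, 0) := by
  rw [Int.even_iff] at hi
  rcases cases_g g with ⟨j, rfl⟩ | ⟨j, rfl⟩
  case inl =>
    simp only [partR, Finset.mem_insert, Finset.mem_singleton, rr_inj, cl_rr, Prod.mk.injEq]
    split_ifs <;> simp <;> omega
  case inr =>
    simp only [partR, Finset.mem_insert, Finset.mem_singleton, sr'_ne_rr, or_self, cl_sr',
      Prod.mk.injEq, false_iff, not_and]
    split_ifs <;> simp <;> omega

lemma fiberS {i : ℤ} (hi : Even i) (g : Dinf) : g ∈ partS i ↔ cl g = (i.natAbs, 1) := by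
  rw [Int.even_iff] at hi
  rcases cases_g g with ⟨j, rfl⟩ | ⟨j, rfl⟩
  case inl =>
    simp only [partS, Finset.mem_insert, Finset.mem_singleton, rr_ne_sr', or_self, cl_rr,
      Prod.mk.injEq, false_iff, not_and]
    split_ifs <;> simp <;> omega
  case inr =>
    simp only [partS, Finset.mem_insert, Finset.mem_singleton, sr'_inj, cl_sr', Prod.mk.injEq]
    split_ifs <;> simp <;> omega

lemma fiberT {i : ℤ} (hi : Odd i) (g : Dinf) : g ∈ partT i ↔ cl g = (i.natAbs, 2) := by
  rw [Int.odd_iff] at hi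
  rcases cases_g g with ⟨j, rfl⟩ | ⟨j, rfl⟩
  case inl =>
    simp only [partT, Finset.mem_insert, Finset.mem_singleton, rr_inj, rr_ne_sr', or_false,
      cl_rr, Prod.mk.injEq]
    split_ifs <;> simp <;> omega
  case inr =>
    simp only [partT, Finset.mem_insert, Finset.mem_singleton, sr'_inj, sr'_ne_rr, false_or,
      cl_sr', Prod.mk.injEq]
    split_ifs <;> simp <;> omega

lemma partR_neg (i : ℤ) : partR (-i) = partR i := by
  ext g; simp [partR]; tauto
lemma partS_neg (i : ℤ) : partS (-i) = partS i := by
  ext g; simp [partS]; try tauto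
lemma partT_neg (i : ℤ) : partT (-i) = partT i := by
  ext g; simp [partT]; tauto

/-- The collection of basic sets. -/
def P : Set (Finset Dinf) :=
  {C : Finset Dinf | ∃ i : ℤ, Odd i ∧ 0 < i ∧
      C = {zz ^ i, zz ^ (-i), zz ^ i * ss, zz ^ (-i) * ss}} ∪
  {C : Finset Dinf | ∃ i : ℤ, Even i ∧ 0 ≤ i ∧ C = {zz ^ i, zz ^ (-i)}} ∪
  {C : Finset Dinf | ∃ i : ℤ, Even i ∧ 0 ≤ i ∧ C = {zz ^ i * ss, zz ^ (-i) * ss}}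

lemma mem_P_iff {C : Finset Dinf} : C ∈ P ↔
    (∃ i : ℤ, Odd i ∧ 0 < i ∧ C = partT i) ∨ (∃ i : ℤ, Even i ∧ 0 ≤ i ∧ C = partR i) ∨
      (∃ i : ℤ, Even i ∧ 0 ≤ i ∧ C = partS i) := by
  simp only [P, Set.mem_union, Set.mem_setOf_eq, or_assoc]
  simp only [setT]
  simp only [setR, setS]

lemma partR_mem {i : ℤ} (hi : Even i) : partR i ∈ P := by
  rw [mem_P_iff]
  rcases le_or_gt 0 i with h | h
  · exact Or.inr (Or.inl ⟨i, hi, h, rfl⟩)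
  · exact Or.inr (Or.inl ⟨-i, hi.neg, by omega, (partR_neg i).symm⟩)

lemma partS_mem {i : ℤ} (hi : Even i) : partS i ∈ P := by
  rw [mem_P_iff]
  rcases le_or_gt 0 i with h | h
  · exact Or.inr (Or.inr ⟨i, hi, h, rfl⟩)
  · exact Or.inr (Or.inr ⟨-i, hi.neg, by omega, (partS_neg i).symm⟩)

lemma partT_mem {i : ℤ} (hi : Odd i) : partT i ∈ P := by
  rw [mem_P_iff]
  have h0 : i ≠ 0 := by rcases Int.odd_iff.mp hi with h; omega
  rcases lt_or_gt_of_ne h0 with h | h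
  · exact Or.inl ⟨-i, hi.neg, by omega, (partT_neg i).symm⟩
  · exact Or.inl ⟨i, hi, h, rfl⟩

variable (F : Type) [Field F] [CharZero F]

/-- The simple quantity attached to a finite set. -/
noncomputable def bar (C : Finset Dinf) : MonoidAlgebra F Dinf :=
  ∑ g ∈ C, MonoidAlgebra.single g (1 : F)

noncomputable def ρ (i : ℤ) : MonoidAlgebra F Dinf :=
  MonoidAlgebra.single (rr i) 1 + MonoidAlgebra.single (rr (-i)) 1
noncomputable def σ' (i : ℤ) : MonoidAlgebra F Dinf :=
  MonoidAlgebra.single (sr' i) 1 + MonoidAlgebra.single (sr' (-i)) 1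

lemma rho_mul_rho (i j : ℤ) : ρ F i * ρ F j = ρ F (i + j) + ρ F (i - j) := by
  simp only [ρ, add_mul, mul_add, MonoidAlgebra.single_mul_single, one_mul, rr_mul_rr]
  ring_nf; abel

lemma sigma_mul_sigma (i j : ℤ) : σ' F i * σ' F j = ρ F (i + j) + ρ F (i - j) := by
  simp only [ρ, σ', add_mul, mul_add, MonoidAlgebra.single_mul_single, one_mul, sr'_mul_sr']
  ring_nf; abel

lemma rho_mul_sigma (i j : ℤ) : ρ F i * σ' F j = σ' F (i + j) + σ' F (i - j) := by
  simp only [ρ, σ', add_mul, mul_add, MonoidAlgebra.single_mul_single, one_mul, rr_mul_sr']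
  ring_nf; abel

lemma sigma_mul_rho (i j : ℤ) : σ' F i * ρ F j = σ' F (i + j) + σ' F (i - j) := by
  simp only [ρ, σ', add_mul, mul_add, MonoidAlgebra.single_mul_single, one_mul, sr'_mul_rr]
  ring_nf; abel

lemma bar_partR (i : ℤ) : ∃ c : F, c ≠ 0 ∧ bar F (partR i) = c • ρ F i := by
  rcases eq_or_ne i 0 with rfl | h
  · refine ⟨(2 : F)⁻¹, by norm_num, ?_⟩
    have h1 : partR 0 = {rr 0} := by simp [partR]
    rw [h1]
    simp only [bar, Finset.sum_singleton, ρ, neg_zero]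
    rw [← MonoidAlgebra.single_add, MonoidAlgebra.smul_single]
    congr 1
    norm_num
  · refine ⟨1, one_ne_zero, ?_⟩
    rw [one_smul]
    have hne : rr i ≠ rr (-i) := by simp; omega
    simp [bar, partR, ρ, Finset.sum_insert, hne]

lemma bar_partS (i : ℤ) : ∃ c : F, c ≠ 0 ∧ bar F (partS i) = c • σ' F i := by
  rcases eq_or_ne i 0 with rfl | h
  · refine ⟨(2 : F)⁻¹, by norm_num, ?_⟩
    have h1 : partS 0 = {sr' 0} := by simp [partS]
    rw [h1]
    simp only [bar, Finset.sum_singleton, σ', neg_zero]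
    rw [← MonoidAlgebra.single_add, MonoidAlgebra.smul_single]
    congr 1
    norm_num
  · refine ⟨1, one_ne_zero, ?_⟩
    rw [one_smul]
    have hne : sr' i ≠ sr' (-i) := by simp; omega
    simp [bar, partS, σ', Finset.sum_insert, hne]

lemma bar_partT {i : ℤ} (hi : Odd i) : bar F (partT i) = ρ F i + σ' F i := by
  have h : i ≠ -i := by rcases Int.odd_iff.mp hi with h; omega
  simp only [bar, partT, ρ, σ']
  rw [Finset.sum_insert (by simp [h]), Finset.sum_insert (by simp <;> omega),
    Finset.sum_insert (by simp <;> omega), Finset.sum_singleton]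
  abel

/-- The span of the simple quantities of basic sets. -/
noncomputable def M : Submodule F (MonoidAlgebra F Dinf) :=
  Submodule.span F (bar F '' P)

lemma rho_mem {i : ℤ} (hi : Even i) : ρ F i ∈ M F := by
  obtain ⟨c, h, hc⟩ := bar_partR F i
  have : ρ F i = c⁻¹ • bar F (partR i) := by rw [hc, smul_smul, inv_mul_cancel₀ h, one_smul]
  rw [this]
  exact Submodule.smul_mem _ _ (Submodule.subset_span ⟨partR i, partR_mem hi, rfl⟩)

lemma sigma_mem {i : ℤ} (hi : Even i) : σ' F i ∈ M F := by
  obtain ⟨c, h, hc⟩ := bar_partS F i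
  have : σ' F i = c⁻¹ • bar F (partS i) := by rw [hc, smul_smul, inv_mul_cancel₀ h, one_smul]
  rw [this]
  exact Submodule.smul_mem _ _ (Submodule.subset_span ⟨partS i, partS_mem hi, rfl⟩)

lemma tau_mem {i : ℤ} (hi : Odd i) : ρ F i + σ' F i ∈ M F := by
  rw [← bar_partT F hi]
  exact Submodule.subset_span ⟨partT i, partT_mem hi, rfl⟩

lemma mul_mem_M {C D : Finset Dinf} (hC : C ∈ P) (hD : D ∈ P) :
    bar F C * bar F D ∈ M F := by
  rw [mem_P_iff] at hC hD
  have key : ∀ X Y : MonoidAlgebra F Dinf,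
      ((∃ i : ℤ, Even i ∧ (X = ρ F i ∨ X = σ' F i)) ∨ (∃ i : ℤ, Odd i ∧ X = ρ F i + σ' F i)) →
      ((∃ j : ℤ, Even j ∧ (Y = ρ F j ∨ Y = σ' F j)) ∨ (∃ j : ℤ, Odd j ∧ Y = ρ F j + σ' F j)) →
      X * Y ∈ M F := by
    rintro X Y (⟨i, hi, rfl | rfl⟩ | ⟨i, hi, rfl⟩) (⟨j, hj, rfl | rfl⟩ | ⟨j, hj, rfl⟩)
    · rw [rho_mul_rho]
      exact add_mem (rho_mem F (hi.add hj)) (rho_mem F (hi.sub hj))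
    · rw [rho_mul_sigma]
      exact add_mem (sigma_mem F (hi.add hj)) (sigma_mem F (hi.sub hj))
    · rw [mul_add, rho_mul_rho, rho_mul_sigma]
      have : ρ F (i + j) + ρ F (i - j) + (σ' F (i + j) + σ' F (i - j))
          = (ρ F (i + j) + σ' F (i + j)) + (ρ F (i - j) + σ' F (i - j)) := by abel
      rw [this]
      exact add_mem (tau_mem F (hi.add_odd hj)) (tau_mem F (hi.sub_odd hj))
    · rw [sigma_mul_rho]
      exact add_mem (sigma_mem F (hi.add hj)) (sigma_mem F (hi.sub hj))
    · rw [sigma_mul_sigma]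
      exact add_mem (rho_mem F (hi.add hj)) (rho_mem F (hi.sub hj))
    · rw [mul_add, sigma_mul_rho, sigma_mul_sigma]
      have : σ' F (i + j) + σ' F (i - j) + (ρ F (i + j) + ρ F (i - j))
          = (ρ F (i + j) + σ' F (i + j)) + (ρ F (i - j) + σ' F (i - j)) := by abel
      rw [this]
      exact add_mem (tau_mem F (hi.add_odd hj)) (tau_mem F (hi.sub_odd hj))
    · rw [add_mul, rho_mul_rho, sigma_mul_rho]
      have : ρ F (i + j) + ρ F (i - j) + (σ' F (i + j) + σ' F (i - j))
          = (ρ F (i + j) + σ' F (i + j)) + (ρ F (i - j) + σ' F (i - j)) := by abel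
      rw [this]
      exact add_mem (tau_mem F (hi.add_even hj)) (tau_mem F (hi.sub_even hj))
    · rw [add_mul, rho_mul_sigma, sigma_mul_sigma]
      have : σ' F (i + j) + σ' F (i - j) + (ρ F (i + j) + ρ F (i - j))
          = (ρ F (i + j) + σ' F (i + j)) + (ρ F (i - j) + σ' F (i - j)) := by abel
      rw [this]
      exact add_mem (tau_mem F (hi.add_even hj)) (tau_mem F (hi.sub_even hj))
    · have : (ρ F i + σ' F i) * (ρ F j + σ' F j)
          = (2 : F) • ((ρ F (i + j) + ρ F (i - j)) + (σ' F (i + j) + σ' F (i - j))) := by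
        rw [add_mul, mul_add, mul_add, rho_mul_rho, rho_mul_sigma, sigma_mul_rho,
          sigma_mul_sigma, two_smul]
        abel
      rw [this]
      refine Submodule.smul_mem _ _ (add_mem (add_mem ?_ ?_) (add_mem ?_ ?_))
      · exact rho_mem F (hi.add_odd hj)
      · exact rho_mem F (hi.sub_odd hj)
      · exact sigma_mem F (hi.add_odd hj)
      · exact sigma_mem F (hi.sub_odd hj)

  -- reduce bar C to the canonical quantities
  have redC : ∀ {C : Finset Dinf},
      ((∃ i : ℤ, Odd i ∧ 0 < i ∧ C = partT i) ∨ (∃ i : ℤ, Even i ∧ 0 ≤ i ∧ C = partR i) ∨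
        (∃ i : ℤ, Even i ∧ 0 ≤ i ∧ C = partS i)) →
      ∃ (c : F) (X : MonoidAlgebra F Dinf), bar F C = c • X ∧
        ((∃ i : ℤ, Even i ∧ (X = ρ F i ∨ X = σ' F i)) ∨
          (∃ i : ℤ, Odd i ∧ X = ρ F i + σ' F i)) := by
    rintro C (⟨i, hi, _, rfl⟩ | ⟨i, hi, _, rfl⟩ | ⟨i, hi, _, rfl⟩)
    · exact ⟨1, _, by rw [one_smul]; exact bar_partT F hi, Or.inr ⟨i, hi, rfl⟩⟩
    · obtain ⟨c, -, hc⟩ := bar_partR F i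
      exact ⟨c, _, hc, Or.inl ⟨i, hi, Or.inl rfl⟩⟩
    · obtain ⟨c, -, hc⟩ := bar_partS F i
      exact ⟨c, _, hc, Or.inl ⟨i, hi, Or.inr rfl⟩⟩
  obtain ⟨c, X, hX, hXc⟩ := redC hC
  obtain ⟨d, Y, hY, hYc⟩ := redC hD
  rw [hX, hY, smul_mul_assoc, mul_smul_comm, smul_smul]
  exact Submodule.smul_mem _ _ (key X Y hXc hYc)

lemma imgR (i : ℤ) : (partR i).image (·⁻¹) = partR i := by
  ext g; simp [partR]; tauto

lemma imgS (i : ℤ) : (partS i).image (·⁻¹) = partS i := by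
  ext g; simp [partS]; try tauto

lemma imgT (i : ℤ) : (partT i).image (·⁻¹) = partT i := by
  ext g; simp [partT]; tauto

lemma exists_fiber {C : Finset Dinf} (hC : C ∈ P) :
    ∃ v : ℕ × ℕ, ∀ g : Dinf, g ∈ C ↔ cl g = v := by
  rw [mem_P_iff] at hC
  rcases hC with ⟨i, hi, _, rfl⟩ | ⟨i, hi, _, rfl⟩ | ⟨i, hi, _, rfl⟩
  · exact ⟨_, fiberT hi⟩
  · exact ⟨_, fiberR hi⟩
  · exact ⟨_, fiberS hi⟩

end Stmt12

/-- The partition of `D∞` into the sets `{z^i, z^(-i), z^i s, z^(-i) s}` for odd positive `i`,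
the sets `{z^i, z^(-i)}` for even `i ≥ 0`, and the sets `{z^i s, z^(-i) s}` for even `i ≥ 0`,
is the partition into basic sets of a Schur ring over `D∞`. -/
theorem stmt_12 (F : Type) [Field F] [CharZero F] :
    ∃ A : SchurRing F Dinf, A.parts =
      {C : Finset Dinf | ∃ i : ℤ, Odd i ∧ 0 < i ∧
          C = {zz ^ i, zz ^ (-i), zz ^ i * ss, zz ^ (-i) * ss}} ∪
      {C : Finset Dinf | ∃ i : ℤ, Even i ∧ 0 ≤ i ∧ C = {zz ^ i, zz ^ (-i)}} ∪
      {C : Finset Dinf | ∃ i : ℤ, Even i ∧ 0 ≤ i ∧ C = {zz ^ i * ss, zz ^ (-i) * ss}} := by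
  classical
  open Stmt12 in
  refine ⟨⟨P, ?_, ?_, ?_, ?_, ?_, ?_⟩, rfl⟩
  · -- nonempty
    intro C hC
    rw [mem_P_iff] at hC
    rcases hC with ⟨i, hi, _, rfl⟩ | ⟨i, hi, _, rfl⟩ | ⟨i, hi, _, rfl⟩
    · exact ⟨rr i, by simp [partT]⟩
    · exact ⟨rr i, by simp [partR]⟩
    · exact ⟨sr' i, by simp [partS]⟩
  · -- cover
    intro g
    rcases cases_g g with ⟨j, rfl⟩ | ⟨j, rfl⟩ <;> rcases Int.even_or_odd j with h | h
    · exact ⟨partR j, partR_mem h, by simp [partR]⟩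
    · exact ⟨partT j, partT_mem h, by simp [partT]⟩
    · exact ⟨partS j, partS_mem h, by simp [partS]⟩
    · exact ⟨partT j, partT_mem h, by simp [partT]⟩
  · -- eq_or_disjoint
    intro C hC D hD
    obtain ⟨v, hv⟩ := exists_fiber hC
    obtain ⟨w, hw⟩ := exists_fiber hD
    rcases em (Disjoint C D) with h | h
    · exact Or.inr h
    · obtain ⟨g, hg1, hg2⟩ := Finset.not_disjoint_iff.1 h
      have hvw : v = w := by rw [← hv g |>.1 hg1, ← hw g |>.1 hg2]
      refine Or.inl (Finset.ext fun x => ?_)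
      rw [hv x, hw x, hvw]
  · -- one_mem
    rw [mem_P_iff]
    exact Or.inr (Or.inl ⟨0, Even.zero, le_refl 0, by simp [partR]⟩)
  · -- inv_mem
    intro C hC
    have hC' := hC
    rw [mem_P_iff] at hC'
    rcases hC' with ⟨i, hi, _, rfl⟩ | ⟨i, hi, _, rfl⟩ | ⟨i, hi, _, rfl⟩
    · rw [imgT]; exact partT_mem hi
    · rw [imgR]; exact partR_mem hi
    · rw [imgS]; exact partS_mem hi
  · -- mul_mem
    intro C hC D hD
    have key : bar F C * bar F D ∈ Submodule.span F (bar F '' P) := mul_mem_M F hC hD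
    obtain ⟨l, hl, hsum⟩ := (Finsupp.mem_span_image_iff_linearCombination F).1 key
    refine ⟨l.support, (Finsupp.mem_supported F l).1 hl, l, ?_⟩
    show bar F C * bar F D = ∑ E ∈ l.support, l E • bar F E
    rw [← hsum, Finsupp.linearCombination_apply, Finsupp.sum]
end

section
/- Let A be a Schur ring over a group G and let C be a basic set of A. Then Stab(C) = {g ∈ G : gC = C} is a finite A-subgroup of G. -/
open scoped BigOperators

/-- The coefficient of `g` in `C̄ · C̄*` counts the number of `e ∈ C` with `g e ∈ C`. -/
lemma schur_aux_coeff (F : Type) [Field F] [CharZero F] (G : Type) [Group G] [DecidableEq G]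
    (C : Finset G) (g : G) :
    ((∑ c ∈ C, MonoidAlgebra.single c (1 : F)) *
      (∑ d ∈ C.image (·⁻¹), MonoidAlgebra.single d (1 : F))).coeff g
      = ((C.filter (fun e => g * e ∈ C)).card : F) := by
  classical
  rw [Finset.sum_mul]
  simp only [Finset.mul_sum, MonoidAlgebra.single_mul_single, one_mul]
  have hinj : Function.Injective (fun x : G => x⁻¹) := fun a b h => by
    simpa using congrArg (·⁻¹) h
  simp only [Finset.sum_image (fun a _ b _ h => hinj h)]
  rw [MonoidAlgebra.coeff_sum, Finset.sum_apply']
  have h0 : ∀ c ∈ C, (∑ e ∈ C, MonoidAlgebra.single (c * e⁻¹) (1:F)).coeff g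
      = ∑ e ∈ C, if c * e⁻¹ = g then (1:F) else 0 := by
    intro c _
    rw [MonoidAlgebra.coeff_sum, Finset.sum_apply']
    refine Finset.sum_congr rfl fun e _ => ?_
    rw [MonoidAlgebra.single_apply]
  rw [Finset.sum_congr rfl h0, Finset.sum_comm]
  have h1 : ∀ e ∈ C, (∑ c ∈ C, if c * e⁻¹ = g then (1:F) else 0)
      = (if g * e ∈ C then (1:F) else 0) := by
    intro e _
    have h2 : ∀ c : G, (c * e⁻¹ = g) = (c = g * e) := by
      intro c
      simp [mul_inv_eq_iff_eq_mul]
    simp_rw [h2]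
    rw [Finset.sum_ite_eq' C (g * e) (fun _ => (1:F))]
  rw [Finset.sum_congr rfl h1, Finset.sum_boole]

/-- For every basic set `C` of a Schur ring `A` over `G`, the stabilizer
`Stab(C) = {g ∈ G : gC = C}` is a finite `A`-subgroup of `G`. -/
theorem stmt_16 (F : Type) [Field F] [CharZero F] (G : Type) [Group G] [DecidableEq G]
    (A : SchurRing F G) (C : Finset G) (hC : C ∈ A.parts) :
    ∃ H : Subgroup G, (H : Set G) = {g : G | (g * ·) '' (C : Set G) = (C : Set G)} ∧
      (H : Set G).Finite ∧ A.IsASet (H : Set G) := by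
  classical
  obtain ⟨c₀, hc₀⟩ := A.nonempty C hC
  obtain ⟨S, hSsub, coef, heq⟩ := A.mul_mem C hC _ (A.inv_mem C hC)
  -- the coefficient function of C̄ · C̄*
  have hval : ∀ g : G,
      ((∑ c ∈ C, MonoidAlgebra.single c (1 : F)) *
        (∑ d ∈ C.image (·⁻¹), MonoidAlgebra.single d (1 : F))).coeff g
      = ∑ E ∈ S, coef E * (if g ∈ E then (1:F) else 0) := by
    intro g
    rw [heq, MonoidAlgebra.coeff_sum, Finset.sum_apply']
    refine Finset.sum_congr rfl fun E _ => ?_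
    rw [MonoidAlgebra.coeff_smul, Finsupp.smul_apply, smul_eq_mul]
    congr 1
    rw [MonoidAlgebra.coeff_sum, Finset.sum_apply']
    have : ∀ x ∈ E, (MonoidAlgebra.single x (1:F)).coeff g = if x = g then (1:F) else 0 :=
      fun x _ => MonoidAlgebra.single_apply
    rw [Finset.sum_congr rfl this, Finset.sum_ite_eq' E g (fun _ => (1:F))]
  -- the coefficient function is constant on basic sets
  have hconst : ∀ D ∈ A.parts, ∀ g ∈ D,
      ((∑ c ∈ C, MonoidAlgebra.single c (1 : F)) *
        (∑ d ∈ C.image (·⁻¹), MonoidAlgebra.single d (1 : F))).coeff g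
      = if D ∈ S then coef D else 0 := by
    intro D hD g hg
    rw [hval g]
    have hnot : ∀ E ∈ S, E ≠ D → g ∉ E := by
      intro E hES hne hgE
      rcases A.eq_or_disjoint E (hSsub hES) D hD with h | h
      · exact hne h
      · exact Finset.disjoint_left.mp h hgE hg
    by_cases hDS : D ∈ S
    · rw [if_pos hDS, Finset.sum_eq_single_of_mem D hDS]
      · rw [if_pos hg, mul_one]
      · intro E hES hne
        rw [if_neg (hnot E hES hne), mul_zero]
    · rw [if_neg hDS]
      refine Finset.sum_eq_zero fun E hES => ?_
      have hne : E ≠ D := fun h => hDS (h ▸ hES)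
      rw [if_neg (hnot E hES hne), mul_zero]
  -- characterization of the stabilizer by the coefficient value
  have hstab : ∀ g : G, ((g * ·) '' (C : Set G) = (C : Set G)) ↔
      ((∑ c ∈ C, MonoidAlgebra.single c (1 : F)) *
        (∑ d ∈ C.image (·⁻¹), MonoidAlgebra.single d (1 : F))).coeff g = (C.card : F) := by
    intro g
    rw [schur_aux_coeff F G C g, Nat.cast_inj]
    constructor
    · intro h
      congr 1
      refine Finset.filter_true_of_mem fun e he => ?_
      have hmem : g * e ∈ ((g * ·) '' (C : Set G)) := ⟨e, he, rfl⟩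
      rw [h] at hmem
      exact_mod_cast hmem
    · intro h
      have hfil : C.filter (fun e => g * e ∈ C) = C :=
        Finset.eq_of_subset_of_card_le (Finset.filter_subset _ _) (le_of_eq h.symm)
      have hmem : ∀ e ∈ C, g * e ∈ C := by
        intro e he
        have hef : e ∈ C.filter (fun e => g * e ∈ C) := by rw [hfil]; exact he
        exact (Finset.mem_filter.mp hef).2
      have himg : C.image (fun e => g * e) = C := by
        refine Finset.eq_of_subset_of_card_le ?_ ?_
        · intro x hx
          obtain ⟨e, he, rfl⟩ := Finset.mem_image.mp hx
          exact hmem e he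
        · rw [Finset.card_image_of_injective _ (mul_right_injective g)]
      calc (g * ·) '' (C : Set G) = ↑(C.image (fun e => g * e)) := by
            rw [Finset.coe_image]
        _ = (C : Set G) := by rw [himg]
  -- the stabilizer is a subgroup
  have Hone : (fun x => (1:G) * x) '' (C : Set G) = (C : Set G) := by
    simp only [one_mul, Set.image_id']
  have Hmul : ∀ {a b : G}, ((fun x => a * x) '' (C : Set G) = C) →
      ((fun x => b * x) '' (C : Set G) = C) →
      ((fun x => a * b * x) '' (C : Set G) = C) := by
    intro a b ha hb
    have hcomp : (fun x => a * b * x) = (fun x => a * x) ∘ (fun x => b * x) := by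
      funext x; simp [mul_assoc]
    rw [hcomp, Set.image_comp, hb, ha]
  have Hinv : ∀ {a : G}, ((fun x => a * x) '' (C : Set G) = C) →
      ((fun x => a⁻¹ * x) '' (C : Set G) = C) := by
    intro a ha
    have hcomp : ((fun x => a⁻¹ * x) ∘ (fun x => a * x)) = fun x : G => x := by
      funext x; simp
    calc (fun x => a⁻¹ * x) '' (C : Set G)
        = (fun x => a⁻¹ * x) '' ((fun x => a * x) '' (C : Set G)) := by rw [ha]
      _ = ((fun x => a⁻¹ * x) ∘ (fun x => a * x)) '' (C : Set G) :=
          (Set.image_comp _ _ _).symm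
      _ = (C : Set G) := by rw [hcomp, Set.image_id']
  refine ⟨{ carrier := {g : G | (g * ·) '' (C : Set G) = (C : Set G)}
            one_mem' := Hone
            mul_mem' := fun ha hb => Hmul ha hb
            inv_mem' := fun ha => Hinv ha }, rfl, ?_, ?_⟩
  · -- finiteness
    refine Set.Finite.subset ((C : Set G).toFinite.image (· * c₀⁻¹)) ?_
    intro g hg
    have hmem : g * c₀ ∈ (C : Set G) := by
      rw [← hg]
      exact ⟨c₀, hc₀, rfl⟩
    exact ⟨g * c₀, hmem, by group⟩
  · -- A-set
    refine ⟨{D | D ∈ A.parts ∧ (D : Set G) ⊆ {g : G | (g * ·) '' (C : Set G) = (C : Set G)}},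
      fun D hD => hD.1, ?_⟩
    ext g
    simp only [Set.mem_setOf_eq, Set.mem_iUnion]
    constructor
    · intro hg
      obtain ⟨D, hD, hgD⟩ := A.cover g
      refine ⟨D, ⟨hD, ?_⟩, hgD⟩
      intro h hh
      have hhD : h ∈ D := by exact_mod_cast hh
      have e1 := hconst D hD g hgD
      have e2 := hconst D hD h hhD
      have : ((∑ c ∈ C, MonoidAlgebra.single c (1 : F)) *
          (∑ d ∈ C.image (·⁻¹), MonoidAlgebra.single d (1 : F))).coeff h = (C.card : F) := by
        rw [e2, ← e1]
        exact (hstab g).mp hg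
      exact (hstab h).mpr this
    · rintro ⟨D, ⟨_, hDsub⟩, hgD⟩
      exact hDsub hgD
end

section
/- Let A be a Schur ring over an infinite cyclic group ⟨z⟩. Then either every basic set of A is a singleton (A is the discrete Schur ring F[⟨z⟩]), or the basic sets of A are exactly the sets {z^i, z^{−i}} for i ∈ ℤ (A is the symmetric Schur ring). -/
open scoped BigOperators

noncomputable section

namespace SR18

variable {F : Type} [Field F] [CharZero F] {G : Type} [Group G] [DecidableEq G]

/-- The "simple quantity" attached to a finite subset of `G`, over a coefficient ring `R`. -/
def qs (R : Type) [Semiring R] (C : Finset G) : MonoidAlgebra R G :=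
  ∑ g ∈ C, MonoidAlgebra.single g (1 : R)

theorem qs_apply (R : Type) [Semiring R] (C : Finset G) (v : G) :
    (qs R C).coeff v = if v ∈ C then 1 else 0 := by
  classical
  rw [qs, MonoidAlgebra.coeff_sum, Finset.sum_apply']
  rw [Finset.sum_congr rfl (fun g _ => MonoidAlgebra.coeff_single_apply)]
  exact Finset.sum_ite_eq' C v fun _ => 1

theorem mul_qs_apply (R : Type) [Semiring R] (x : MonoidAlgebra R G) (C : Finset G) (v : G) :
    (x * qs R C).coeff v = ∑ c ∈ C, x.coeff (v * c⁻¹) := by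
  rw [qs, Finset.mul_sum, MonoidAlgebra.coeff_sum, Finset.sum_apply']
  exact Finset.sum_congr rfl fun c _ => by
    rw [MonoidAlgebra.coeff_mul_single_apply, mul_one]

theorem pow_cast (R : Type) [Semiring R] (C : Finset G) : ∀ (n : ℕ) (v : G),
    ((qs R C ^ n).coeff v) = (((qs ℕ C ^ n).coeff v : ℕ) : R)
  | 0, v => by
      rw [pow_zero, pow_zero, MonoidAlgebra.one_def, MonoidAlgebra.one_def,
        MonoidAlgebra.coeff_single_apply, MonoidAlgebra.coeff_single_apply]
      split_ifs <;> simp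
  | n+1, v => by
      rw [pow_succ, pow_succ, mul_qs_apply, mul_qs_apply, Nat.cast_sum]
      exact Finset.sum_congr rfl fun c _ => pow_cast R C n (v * c⁻¹)

theorem mul_cast (R : Type) [Semiring R] (P Q : Finset G) (v : G) :
    ((qs R P * qs R Q).coeff v) = (((qs ℕ P * qs ℕ Q).coeff v : ℕ) : R) := by
  rw [mul_qs_apply, mul_qs_apply, Nat.cast_sum]
  refine Finset.sum_congr rfl fun c _ => ?_
  rw [qs_apply, qs_apply]
  split_ifs <;> simp

variable (A : SchurRing F G)

/-- The span of the simple quantities of the basic sets. -/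
def spanA : Submodule F (MonoidAlgebra F G) :=
  Submodule.span F (qs F '' A.parts)

theorem qs_mem_spanA {P : Finset G} (hP : P ∈ A.parts) : qs F P ∈ spanA A :=
  Submodule.subset_span ⟨P, hP, rfl⟩

theorem qs_mul_qs_mem {P Q : Finset G} (hP : P ∈ A.parts) (hQ : Q ∈ A.parts) :
    qs F P * qs F Q ∈ spanA A := by
  obtain ⟨S, hS, coef, heq⟩ := A.mul_mem P hP Q hQ
  have h2 : qs F P * qs F Q = ∑ E ∈ S, coef E • qs F E := heq
  rw [h2]
  exact Submodule.sum_mem _ fun E hE => Submodule.smul_mem _ _ (qs_mem_spanA A (hS hE))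

theorem mul_qs_mem {x : MonoidAlgebra F G} (hx : x ∈ spanA A) {Q : Finset G}
    (hQ : Q ∈ A.parts) : x * qs F Q ∈ spanA A := by
  induction hx using Submodule.span_induction with
  | mem y hy =>
      obtain ⟨P, hP, rfl⟩ := hy
      exact qs_mul_qs_mem A hP hQ
  | zero => rw [zero_mul]; exact (spanA A).zero_mem
  | add y w hy hw hy' hw' => rw [add_mul]; exact (spanA A).add_mem hy' hw'
  | smul a y hy hy' => rw [smul_mul_assoc]; exact (spanA A).smul_mem a hy'

theorem pow_qs_mem {P : Finset G} (hP : P ∈ A.parts) :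
    ∀ n : ℕ, n ≠ 0 → qs F P ^ n ∈ spanA A := by
  intro n
  induction n with
  | zero => intro h; exact absurd rfl h
  | succ n ih =>
    intro _
    rcases Nat.eq_zero_or_pos n with h | h
    · subst h; rw [pow_one]; exact qs_mem_spanA A hP
    · rw [pow_succ]; exact mul_qs_mem A (ih h.ne') hP

theorem const_on_parts {x : MonoidAlgebra F G} (hx : x ∈ spanA A) {D : Finset G}
    (hD : D ∈ A.parts) {u v : G} (hu : u ∈ D) (hv : v ∈ D) : x.coeff u = x.coeff v := by
  induction hx using Submodule.span_induction with
  | mem y hy =>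
      obtain ⟨P, hP, rfl⟩ := hy
      rw [qs_apply, qs_apply]
      rcases A.eq_or_disjoint P hP D hD with rfl | hdis
      · rw [if_pos hu, if_pos hv]
      · rw [if_neg (fun h => (Finset.disjoint_left.mp hdis h) hu),
          if_neg (fun h => (Finset.disjoint_left.mp hdis h) hv)]
  | zero => simp
  | add y w hy hw hy' hw' => rw [MonoidAlgebra.coeff_add, Finsupp.add_apply, Finsupp.add_apply, hy', hw']
  | smul a y hy hy' => rw [MonoidAlgebra.coeff_smul_apply, MonoidAlgebra.coeff_smul_apply, hy']

theorem cnt2_const {P Q D : Finset G} (hP : P ∈ A.parts) (hQ : Q ∈ A.parts)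
    (hD : D ∈ A.parts) {u v : G} (hu : u ∈ D) (hv : v ∈ D) :
    (qs ℕ P * qs ℕ Q).coeff u = (qs ℕ P * qs ℕ Q).coeff v := by
  have h := const_on_parts A (qs_mul_qs_mem A hP hQ) hD hu hv
  rw [mul_cast F P Q u, mul_cast F P Q v] at h
  exact_mod_cast h

theorem cntPow_const {P D : Finset G} (hP : P ∈ A.parts) (hD : D ∈ A.parts)
    {n : ℕ} (hn : n ≠ 0) {u v : G} (hu : u ∈ D) (hv : v ∈ D) :
    (qs ℕ P ^ n).coeff u = (qs ℕ P ^ n).coeff v := by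
  have h := const_on_parts A (pow_qs_mem A hP n hn) hD hu hv
  rw [pow_cast F P n u, pow_cast F P n v] at h
  exact_mod_cast h

theorem frob_cast {p : ℕ} (hp : p.Prime) (hcomm : ∀ a b : G, a * b = b * a)
    (hinj : Function.Injective fun g : G => g ^ p)
    (P : Finset G) (v : G) :
    (((qs ℕ P ^ p).coeff v : ℕ) : ZMod p) = if v ∈ P.image (· ^ p) then 1 else 0 := by
  haveI : Fact p.Prime := ⟨hp⟩
  haveI : CharP (MonoidAlgebra (ZMod p) G) p := by
    have hsi : Function.Injective
        (MonoidAlgebra.singleOneRingHom : ZMod p →+* MonoidAlgebra (ZMod p) G) := by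
      intro r s hrs
      have := MonoidAlgebra.single_right_injective (m := (1 : G)) (R := ZMod p)
      exact this hrs
    exact charP_of_injective_ringHom hsi p
  rw [← pow_cast (ZMod p) P p v]
  have h1 : qs (ZMod p) P ^ p = ∑ c ∈ P, MonoidAlgebra.single (c ^ p) (1 : ZMod p) := by
    rw [qs]
    induction P using Finset.induction_on with
    | empty => simp [zero_pow hp.pos.ne']
    | @insert a s hx ih =>
      have hco : Commute (MonoidAlgebra.single a (1 : ZMod p))
          (∑ x ∈ s, MonoidAlgebra.single x (1 : ZMod p)) := by
        refine Commute.sum_right _ _ _ fun c _ => (commute_iff_eq _ _).mpr ?_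
        rw [MonoidAlgebra.single_mul_single, MonoidAlgebra.single_mul_single, hcomm]
      rw [Finset.sum_insert hx, Finset.sum_insert hx,
        add_pow_char_of_commute p hco, ih, MonoidAlgebra.single_pow, one_pow]
  rw [h1, MonoidAlgebra.coeff_sum, Finset.sum_apply']
  by_cases hv : v ∈ P.image (· ^ p)
  · obtain ⟨c₀, hc₀, hc₀v⟩ := Finset.mem_image.mp hv
    rw [if_pos hv, Finset.sum_eq_single c₀]
    · rw [MonoidAlgebra.coeff_single_apply, if_pos hc₀v]
    · intro c hc hne
      rw [MonoidAlgebra.coeff_single_apply, if_neg]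
      intro h
      exact hne (hinj (h.trans hc₀v.symm))
    · intro habs
      exact absurd hc₀ habs
  · rw [if_neg hv, Finset.sum_eq_zero]
    intro c hc
    rw [MonoidAlgebra.coeff_single_apply, if_neg]
    intro h
    exact hv (Finset.mem_image.mpr ⟨c, hc, h⟩)

/-- The basic set containing a given element. -/
def partOf (g : G) : Finset G := (A.cover g).choose

theorem partOf_mem (g : G) : partOf A g ∈ A.parts := (A.cover g).choose_spec.1

theorem mem_partOf (g : G) : g ∈ partOf A g := (A.cover g).choose_spec.2

theorem partOf_eq {P : Finset G} (hP : P ∈ A.parts) {g : G} (hg : g ∈ P) :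
    P = partOf A g := by
  rcases A.eq_or_disjoint P hP (partOf A g) (partOf_mem A g) with h | h
  · exact h
  · exact absurd (mem_partOf A g) (Finset.disjoint_left.mp h hg)

theorem partOf_one : partOf A 1 = {1} :=
  (partOf_eq A A.one_mem (Finset.mem_singleton_self 1)).symm

theorem partOf_inv (g : G) : partOf A g⁻¹ = (partOf A g).image (·⁻¹) :=
  (partOf_eq A (A.inv_mem _ (partOf_mem A g))
    (Finset.mem_image_of_mem _ (mem_partOf A g))).symm

theorem part_pow_prime {p : ℕ} (hp : p.Prime) (hcomm : ∀ a b : G, a * b = b * a)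
    (hinj : Function.Injective fun g : G => g ^ p)
    {P : Finset G} (hP : P ∈ A.parts) {c : G} (hc : c ∈ P) :
    partOf A (c ^ p) ⊆ P.image (· ^ p) := by
  haveI : Fact p.Prime := ⟨hp⟩
  haveI : Fact (1 < p) := ⟨hp.one_lt⟩
  intro y hy
  have hcnt : (qs ℕ P ^ p).coeff (c ^ p) = (qs ℕ P ^ p).coeff y :=
    cntPow_const A hP (partOf_mem A (c ^ p)) hp.pos.ne' (mem_partOf A (c ^ p)) hy
  have h1 := frob_cast hp hcomm hinj P (c ^ p)
  have h2 := frob_cast hp hcomm hinj P y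
  rw [hcnt] at h1
  rw [h1] at h2
  rw [if_pos (Finset.mem_image_of_mem _ hc)] at h2
  by_contra hy'
  rw [if_neg hy'] at h2
  exact one_ne_zero h2

theorem part_pow (hcomm : ∀ a b : G, a * b = b * a)
    (hinj : ∀ p : ℕ, p ≠ 0 → Function.Injective fun g : G => g ^ p) :
    ∀ n : ℕ, n ≠ 0 → ∀ g : G, partOf A (g ^ n) ⊆ (partOf A g).image (· ^ n) := by
  intro n
  induction n using Nat.strong_induction_on with
  | _ n IH =>
    intro hn g
    rcases eq_or_ne n 1 with rfl | h1
    · intro y hy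
      rw [pow_one] at hy
      exact Finset.mem_image.mpr ⟨y, hy, pow_one y⟩
    · have hp : n.minFac.Prime := Nat.minFac_prime h1
      have hdvd : n.minFac ∣ n := Nat.minFac_dvd n
      have hnm : n / n.minFac * n.minFac = n := Nat.div_mul_cancel hdvd
      have hmlt : n / n.minFac < n := Nat.div_lt_self (Nat.pos_of_ne_zero hn) hp.one_lt
      have hm0 : n / n.minFac ≠ 0 := by
        intro h
        rw [h, zero_mul] at hnm
        exact hn hnm.symm
      intro y hy
      have h2 : partOf A ((g ^ (n / n.minFac)) ^ n.minFac) ⊆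
          (partOf A (g ^ (n / n.minFac))).image (· ^ n.minFac) :=
        part_pow_prime A hp hcomm (hinj _ hp.pos.ne') (partOf_mem A (g ^ (n / n.minFac)))
          (mem_partOf A (g ^ (n / n.minFac)))
      rw [← hnm, pow_mul] at hy
      obtain ⟨w, hw, rfl⟩ := Finset.mem_image.mp (h2 hy)
      obtain ⟨u, hu, rfl⟩ := Finset.mem_image.mp (IH _ hmlt hm0 g hw)
      exact Finset.mem_image.mpr ⟨u, hu, by rw [← pow_mul, hnm]⟩

section Z

variable (z : G)

theorem einj (hinf : ¬ IsOfFinOrder z) : Function.Injective fun i : ℤ => z ^ i :=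
  injective_zpow_iff_not_isOfFinOrder.mpr hinf

/-- A choice of exponent for each element of an (infinite) cyclic group. -/
def zexp (hgen : ∀ g : G, g ∈ Subgroup.zpowers z) (g : G) : ℤ :=
  (Subgroup.mem_zpowers_iff.mp (hgen g)).choose

theorem zexp_spec (hgen : ∀ g : G, g ∈ Subgroup.zpowers z) (g : G) :
    z ^ zexp z hgen g = g :=
  (Subgroup.mem_zpowers_iff.mp (hgen g)).choose_spec

theorem pow_exp (hgen : ∀ g : G, g ∈ Subgroup.zpowers z) (g : G) (n : ℕ) :
    g ^ n = z ^ (zexp z hgen g * n) := by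
  conv_lhs => rw [← zexp_spec z hgen g]
  rw [← zpow_natCast (z ^ zexp z hgen g) n, ← zpow_mul]

theorem powinj (hgen : ∀ g : G, g ∈ Subgroup.zpowers z) (hinf : ¬ IsOfFinOrder z)
    (n : ℕ) (hn : n ≠ 0) :
    Function.Injective fun g : G => g ^ n := by
  intro g h hgh
  simp only at hgh
  rw [pow_exp z hgen g n, pow_exp z hgen h n] at hgh
  have h1 := einj z hinf hgh
  have hn' : (n : ℤ) ≠ 0 := Int.natCast_ne_zero.mpr hn
  have h2 : zexp z hgen g = zexp z hgen h := mul_right_cancel₀ hn' h1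
  rw [← zexp_spec z hgen g, ← zexp_spec z hgen h, h2]

end Z

end SR18

end

/-- A Schur ring over an infinite cyclic group `⟨z⟩` is either discrete (all basic sets are
singletons) or symmetric (the basic sets are exactly the sets `{z^i, z^(-i)}`, `i ∈ ℤ`). -/
theorem stmt_18 (F : Type) [Field F] [CharZero F] (G : Type) [Group G] [DecidableEq G]
    (z : G) (hgen : ∀ g : G, g ∈ Subgroup.zpowers z) (hinf : ¬ IsOfFinOrder z)
    (A : SchurRing F G) :
    (∀ C ∈ A.parts, ∃ g : G, C = {g}) ∨
    A.parts = {C : Finset G | ∃ i : ℤ, C = {z ^ i, z ^ (-i)}} := by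
  classical
  have hez : Function.Injective fun i : ℤ => z ^ i := SR18.einj z hinf
  have hzNe : ∀ i j : ℤ, i ≠ j → z ^ i ≠ z ^ j := fun i j hij h => hij (hez h)
  have hzspec : ∀ g : G, z ^ SR18.zexp z hgen g = g := SR18.zexp_spec z hgen
  have hcomm : ∀ a b : G, a * b = b * a := by
    intro a b
    obtain ⟨i, hi⟩ := Subgroup.mem_zpowers_iff.mp (hgen a)
    obtain ⟨j, hj⟩ := Subgroup.mem_zpowers_iff.mp (hgen b)
    rw [← hi, ← hj, ← zpow_add, ← zpow_add, add_comm]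
  have hpinj : ∀ p : ℕ, p ≠ 0 → Function.Injective fun g : G => g ^ p :=
    fun p hp => SR18.powinj z hgen hinf p hp
  have hpart_pow := SR18.part_pow A hcomm hpinj
  have hCp : SR18.partOf A z ∈ A.parts := SR18.partOf_mem A z
  have hzC : z ∈ SR18.partOf A z := SR18.mem_partOf A z
  have hmulz : ∀ i : ℤ, z ^ i * z = z ^ (i + 1) := fun i => by
    rw [zpow_add, zpow_one]
  have hmulzinv : ∀ i : ℤ, z ^ i * z⁻¹ = z ^ (i - 1) := fun i => by
    rw [zpow_sub, zpow_one]
  by_cases hdisc : SR18.partOf A z = {z}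
  · left
    have key : ∀ n : ℕ, n ≠ 0 → SR18.partOf A (z ^ n) = {z ^ n} := by
      intro n hn
      have h := hpart_pow n hn z
      rw [hdisc, Finset.image_singleton] at h
      rcases Finset.subset_singleton_iff.mp h with h0 | h0
      · exact absurd (h0 ▸ SR18.mem_partOf A (z ^ n)) (Finset.notMem_empty _)
      · exact h0
    intro P hP
    obtain ⟨g, hg⟩ := A.nonempty P hP
    have hPg : P = SR18.partOf A g := SR18.partOf_eq A hP hg
    have hgz : z ^ SR18.zexp z hgen g = g := hzspec g
    refine ⟨g, ?_⟩
    rcases lt_trichotomy (SR18.zexp z hgen g) 0 with hlt | heq | hgt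
    · have hn0 : (-(SR18.zexp z hgen g)).toNat ≠ 0 := by omega
      have hzi : z ^ ((-(SR18.zexp z hgen g)).toNat) = g⁻¹ := by
        rw [← zpow_natCast z ((-(SR18.zexp z hgen g)).toNat),
          Int.toNat_of_nonneg (by omega : (0:ℤ) ≤ -(SR18.zexp z hgen g)), zpow_neg, hgz]
      have h1 : SR18.partOf A g⁻¹ = {g⁻¹} := by rw [← hzi]; exact key _ hn0
      have h2 : SR18.partOf A g = {g} := by
        apply Finset.image_injective (inv_injective : Function.Injective (·⁻¹ : G → G))
        rw [← SR18.partOf_inv A g, h1, Finset.image_singleton]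
      rw [hPg, h2]
    · have hg1 : g = 1 := by rw [← hgz, heq, zpow_zero]
      rw [hPg, hg1, SR18.partOf_one]
    · have hn0 : (SR18.zexp z hgen g).toNat ≠ 0 := by omega
      have hzi : z ^ ((SR18.zexp z hgen g).toNat) = g := by
        rw [← zpow_natCast z ((SR18.zexp z hgen g).toNat),
          Int.toNat_of_nonneg (by omega : (0:ℤ) ≤ SR18.zexp z hgen g), hgz]
      rw [hPg, ← hzi, key _ hn0]
  · right
    -- the basic set of z has at least two elements
    have hcard : 2 ≤ (SR18.partOf A z).card := by
      by_contra h
      have h0 : 0 < (SR18.partOf A z).card := Finset.card_pos.mpr ⟨z, hzC⟩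
      have h1 : (SR18.partOf A z).card = 1 := by omega
      obtain ⟨c, hc⟩ := Finset.card_eq_one.mp h1
      rw [hc, Finset.mem_singleton] at hzC
      exact hdisc (by rw [hc, hzC])
    have hzexp_injective : Function.Injective (SR18.zexp z hgen) := by
      intro g h hgh
      rw [← hzspec g, ← hzspec h, hgh]
    have hmem_exp : ∀ x ∈ (SR18.partOf A z).image (SR18.zexp z hgen),
        z ^ x ∈ SR18.partOf A z := by
      intro x hx
      obtain ⟨c, hc, rfl⟩ := Finset.mem_image.mp hx
      rw [hzspec]; exact hc
    have hexpz : SR18.zexp z hgen z = 1 := by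
      apply hez
      show z ^ SR18.zexp z hgen z = z ^ (1:ℤ)
      rw [hzspec, zpow_one]
    have h1C : (1:ℤ) ∈ (SR18.partOf A z).image (SR18.zexp z hgen) :=
      hexpz ▸ Finset.mem_image_of_mem _ hzC
    have hChne : ((SR18.partOf A z).image (SR18.zexp z hgen)).Nonempty := ⟨1, h1C⟩
    have h0Ch : (0:ℤ) ∉ (SR18.partOf A z).image (SR18.zexp z hgen) := by
      intro h0
      have h1 : (1:G) ∈ SR18.partOf A z := by
        have := hmem_exp 0 h0; rwa [zpow_zero] at this
      have h2 : SR18.partOf A z = SR18.partOf A 1 := SR18.partOf_eq A hCp h1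
      rw [h2, SR18.partOf_one, Finset.mem_singleton] at hzC
      exact hinf (by rw [hzC]; exact IsOfFinOrder.one)
    set Ch := (SR18.partOf A z).image (SR18.zexp z hgen) with hChdef
    -- the maximal exponent is 1
    have haeq : Ch.max' hChne = 1 := by
      by_contra hne1
      have ha1 : 1 ≤ Ch.max' hChne := Finset.le_max' _ 1 h1C
      have ha2 : 2 ≤ Ch.max' hChne := by omega
      have hzaC : z ^ Ch.max' hChne ∈ SR18.partOf A z :=
        hmem_exp _ (Finset.max'_mem _ _)
      have hCa : SR18.partOf A z = SR18.partOf A (z ^ Ch.max' hChne) :=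
        SR18.partOf_eq A hCp hzaC
      have haN : (((Ch.max' hChne).toNat : ℤ)) = Ch.max' hChne :=
        Int.toNat_of_nonneg (by omega)
      have hsub : SR18.partOf A z ⊆ (SR18.partOf A z).image (· ^ (Ch.max' hChne).toNat) := by
        have h := hpart_pow (Ch.max' hChne).toNat (by omega) z
        rw [← zpow_natCast z (Ch.max' hChne).toNat, haN, ← hCa] at h
        exact h
      have hMne : (Ch.image Int.natAbs).Nonempty := hChne.image _
      obtain ⟨x₀, hx₀, hx₀abs⟩ :=
        Finset.mem_image.mp (Finset.min'_mem (Ch.image Int.natAbs) hMne)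
      have hm1 : 1 ≤ (Ch.image Int.natAbs).min' hMne := by
        rcases Nat.eq_zero_or_pos ((Ch.image Int.natAbs).min' hMne) with h | h
        · exfalso
          apply h0Ch
          have hx00 : x₀ = 0 := by omega
          rwa [← hx00]
        · omega
      have hz₀ : z ^ x₀ ∈ SR18.partOf A z := hmem_exp x₀ hx₀
      obtain ⟨c₁, hc₁, hEq⟩ := Finset.mem_image.mp (hsub hz₀)
      have hx₀eq : x₀ = SR18.zexp z hgen c₁ * (Ch.max' hChne).toNat := by
        apply hez
        show z ^ x₀ = z ^ _
        rw [← SR18.pow_exp z hgen c₁ (Ch.max' hChne).toNat, hEq]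
      have hx₁ : SR18.zexp z hgen c₁ ∈ Ch := Finset.mem_image_of_mem _ hc₁
      have hle : (Ch.image Int.natAbs).min' hMne ≤ (SR18.zexp z hgen c₁).natAbs :=
        Finset.min'_le _ _ (Finset.mem_image_of_mem _ hx₁)
      have habs : (Ch.image Int.natAbs).min' hMne
          = (SR18.zexp z hgen c₁).natAbs * (Ch.max' hChne).toNat := by
        rw [← hx₀abs, hx₀eq, Int.natAbs_mul, Int.natAbs_natCast]
      have h2aN : 2 ≤ (Ch.max' hChne).toNat := by omega
      have hmul : (SR18.zexp z hgen c₁).natAbs * 2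
          ≤ (SR18.zexp z hgen c₁).natAbs * (Ch.max' hChne).toNat :=
        Nat.mul_le_mul_left _ h2aN
      rw [← habs] at hmul
      omega
    -- the minimal exponent is -1
    have hbmem : Ch.min' hChne ∈ Ch := Finset.min'_mem _ _
    have hbeq : Ch.min' hChne = -1 := by
      have hcard2 : 1 < Ch.card := by
        rw [hChdef, Finset.card_image_of_injective _ hzexp_injective]; omega
      have hblt : Ch.min' hChne < Ch.max' hChne := Finset.min'_lt_max'_of_card _ hcard2
      have hbne0 : Ch.min' hChne ≠ 0 := fun h => h0Ch (h ▸ hbmem)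
      have hb1 : Ch.min' hChne ≤ -1 := by omega
      have hnZ : ((((-(Ch.min' hChne)).toNat : ℕ) : ℤ)) = -(Ch.min' hChne) :=
        Int.toNat_of_nonneg (by omega)
      have hzbC : z ^ Ch.min' hChne ∈ SR18.partOf A z := hmem_exp _ hbmem
      have hCinv : (SR18.partOf A z).image (·⁻¹) ∈ A.parts := A.inv_mem _ hCp
      have hmeminv : z ^ ((-(Ch.min' hChne)).toNat : ℕ) ∈ (SR18.partOf A z).image (·⁻¹) := by
        refine Finset.mem_image.mpr ⟨z ^ Ch.min' hChne, hzbC, ?_⟩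
        show (z ^ Ch.min' hChne)⁻¹ = z ^ ((-(Ch.min' hChne)).toNat : ℕ)
        rw [← zpow_natCast z ((-(Ch.min' hChne)).toNat), hnZ, zpow_neg]
      have hCi : (SR18.partOf A z).image (·⁻¹)
          = SR18.partOf A (z ^ ((-(Ch.min' hChne)).toNat : ℕ)) :=
        SR18.partOf_eq A hCinv hmeminv
      have hsub : (SR18.partOf A z).image (·⁻¹)
          ⊆ (SR18.partOf A z).image (· ^ (-(Ch.min' hChne)).toNat) := by
        rw [hCi]
        exact hpart_pow _ (by omega) z
      have hzinvmem : z⁻¹ ∈ (SR18.partOf A z).image (·⁻¹) :=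
        Finset.mem_image_of_mem _ hzC
      obtain ⟨c, hc, hEq⟩ := Finset.mem_image.mp (hsub hzinvmem)
      have hmeq : SR18.zexp z hgen c * ((-(Ch.min' hChne)).toNat : ℤ) = -1 := by
        apply hez
        show z ^ _ = z ^ (-1 : ℤ)
        rw [← SR18.pow_exp z hgen c (-(Ch.min' hChne)).toNat, hEq, zpow_neg, zpow_one]
      have hdvd : (((-(Ch.min' hChne)).toNat : ℤ)) ∣ (1 : ℤ) := by
        refine dvd_neg.mp ?_
        exact Dvd.intro_left _ hmeq
      have hle1 := Int.le_of_dvd one_pos hdvd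
      omega
    -- the basic set of z is {z, z⁻¹}
    have hCsub : SR18.partOf A z ⊆ {z, z⁻¹} := by
      intro c hc
      have hx : SR18.zexp z hgen c ∈ Ch := Finset.mem_image_of_mem _ hc
      have hle : SR18.zexp z hgen c ≤ Ch.max' hChne := Finset.le_max' _ _ hx
      have hge : Ch.min' hChne ≤ SR18.zexp z hgen c := Finset.min'_le _ _ hx
      have hne0 : SR18.zexp z hgen c ≠ 0 := fun h => h0Ch (h ▸ hx)
      have h1 : SR18.zexp z hgen c = 1 ∨ SR18.zexp z hgen c = -1 := by omega
      rcases h1 with h | h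
      · have : c = z := by rw [← hzspec c, h, zpow_one]
        rw [this]; exact Finset.mem_insert_self _ _
      · have : c = z⁻¹ := by rw [← hzspec c, h, zpow_neg, zpow_one]
        rw [this]; exact Finset.mem_insert.mpr (Or.inr (Finset.mem_singleton_self _))
    have hzne : z ≠ z⁻¹ := by
      intro h
      have h2 : z ^ (1:ℤ) = z ^ (-1:ℤ) := by rw [zpow_one, zpow_neg, zpow_one]; exact h
      have := hez h2
      omega
    have hCeq : SR18.partOf A z = {z, z⁻¹} := by
      apply Finset.eq_of_subset_of_card_le hCsub
      rw [Finset.card_insert_of_notMem (by simpa using hzne), Finset.card_singleton]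
      exact hcard
    have hzinvC : z⁻¹ ∈ SR18.partOf A z := by
      rw [hCeq]; exact Finset.mem_insert.mpr (Or.inr (Finset.mem_singleton_self _))
    -- basic sets of positive powers are contained in the symmetric pairs
    have hpairZ : ∀ i : ℤ, 1 ≤ i → SR18.partOf A (z ^ i) ⊆ {z ^ i, z ^ (-i)} := by
      intro i hi
      have h := hpart_pow i.toNat (by omega) z
      rw [hCeq, Finset.image_insert, Finset.image_singleton] at h
      have h2 : z ^ (i.toNat) = z ^ i := by
        rw [← zpow_natCast z i.toNat, Int.toNat_of_nonneg (by omega)]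
      have h3 : (z⁻¹) ^ (i.toNat) = z ^ (-i) := by
        rw [inv_pow, h2, ← zpow_neg]
      rw [h2, h3] at h
      exact h
    -- evaluation of products against the basic set of z
    have hcnt2_eval : ∀ (P : Finset G) (v : G),
        (SR18.qs ℕ P * SR18.qs ℕ (SR18.partOf A z)).coeff v
          = (if v * z⁻¹ ∈ P then 1 else 0) + (if v * z ∈ P then 1 else 0) := by
      intro P v
      rw [SR18.mul_qs_apply, hCeq, Finset.sum_pair hzne, SR18.qs_apply, SR18.qs_apply, inv_inv]
    have hcnt2_single : ∀ (g₁ g₂ v : G),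
        (SR18.qs ℕ {g₁} * SR18.qs ℕ {g₂}).coeff v = if v * g₂⁻¹ = g₁ then 1 else 0 := by
      intro g₁ g₂ v
      rw [SR18.mul_qs_apply, Finset.sum_singleton, SR18.qs_apply]
      simp only [Finset.mem_singleton]
    -- all symmetric pairs are full basic sets
    have hnosingZ : ∀ i : ℤ, 1 ≤ i → z ^ (-i) ∈ SR18.partOf A (z ^ i) := by
      intro i hi
      by_contra hnevm
      have hQn : SR18.partOf A (z ^ i) = {z ^ i} := by
        apply Finset.Subset.antisymm
        · intro y hy
          rcases Finset.mem_insert.mp (hpairZ i hi hy) with h | h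
          · rw [h]; exact Finset.mem_singleton_self _
          · rw [Finset.mem_singleton] at h
            exact absurd (h ▸ hy) hnevm
        · rw [Finset.singleton_subset_iff]; exact SR18.mem_partOf A _
      have hQnP : ({z ^ i} : Finset G) ∈ A.parts := by
        rw [← hQn]; exact SR18.partOf_mem A _
      have hzn1 : z ^ (i+1) ∈ SR18.partOf A (z ^ (i+1)) := SR18.mem_partOf A _
      have hstep : SR18.partOf A (z ^ (i+1)) = {z ^ (i+1)} := by
        apply Finset.Subset.antisymm
        · intro y hy
          rcases Finset.mem_insert.mp (hpairZ (i+1) (by omega) hy) with h | h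
          · rw [h]; exact Finset.mem_singleton_self _
          · exfalso
            rw [Finset.mem_singleton] at h
            have hymem : z ^ (-(i+1)) ∈ SR18.partOf A (z ^ (i+1)) := h ▸ hy
            have hcnt := SR18.cnt2_const A hQnP hCp
              (SR18.partOf_mem A (z ^ (i+1))) hzn1 hymem
            rw [hcnt2_eval, hcnt2_eval] at hcnt
            have l1 : z ^ (i+1) * z⁻¹ ∈ ({z ^ i} : Finset G) := by
              rw [hmulzinv, Finset.mem_singleton]
              congr 1
              omega
            have l2 : z ^ (i+1) * z ∉ ({z ^ i} : Finset G) := by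
              rw [hmulz, Finset.mem_singleton]
              exact hzNe _ _ (by omega)
            have l3 : z ^ (-(i+1)) * z⁻¹ ∉ ({z ^ i} : Finset G) := by
              rw [hmulzinv, Finset.mem_singleton]
              exact hzNe _ _ (by omega)
            have l4 : z ^ (-(i+1)) * z ∉ ({z ^ i} : Finset G) := by
              rw [hmulz, Finset.mem_singleton]
              exact hzNe _ _ (by omega)
            rw [if_pos l1, if_neg l2, if_neg l3, if_neg l4] at hcnt
            exact absurd hcnt (by norm_num)
        · rw [Finset.singleton_subset_iff]; exact hzn1
      have hPinv : SR18.partOf A (z ^ (-i)) = {z ^ (-i)} := by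
        have h := SR18.partOf_inv A (z ^ i)
        rw [hQn, Finset.image_singleton] at h
        rw [← zpow_neg] at h
        exact h
      have hstepP : ({z ^ (i+1)} : Finset G) ∈ A.parts := by
        rw [← hstep]; exact SR18.partOf_mem A _
      have hPinvP : ({z ^ (-i)} : Finset G) ∈ A.parts := by
        rw [← hPinv]; exact SR18.partOf_mem A _
      have hz2 := SR18.cnt2_const A hstepP hPinvP hCp hzC hzinvC
      rw [hcnt2_single, hcnt2_single] at hz2
      have m0 : (z ^ (-i))⁻¹ = z ^ i := by rw [← zpow_neg, neg_neg]
      have m1 : z * (z ^ (-i))⁻¹ = z ^ (1 + i) := by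
        rw [m0, ← zpow_one_add]
      have m2 : z⁻¹ * (z ^ (-i))⁻¹ = z ^ (-1 + i) := by
        rw [m0, ← zpow_neg_one, ← zpow_add]
      rw [m1, m2] at hz2
      have e1 : z ^ (1 + i) = z ^ (i + 1) := by rw [show 1 + i = i + 1 by omega]
      have e2 : z ^ (-1 + i) ≠ z ^ (i + 1) := hzNe _ _ (by omega)
      rw [if_pos e1, if_neg e2] at hz2
      exact absurd hz2 (by norm_num)
    have hpartEq : ∀ i : ℤ, 1 ≤ i → SR18.partOf A (z ^ i) = {z ^ i, z ^ (-i)} := by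
      intro i hi
      apply Finset.Subset.antisymm (hpairZ i hi)
      intro y hy
      rcases Finset.mem_insert.mp hy with h | h
      · rw [h]; exact SR18.mem_partOf A _
      · rw [Finset.mem_singleton] at h
        rw [h]; exact hnosingZ i hi
    ext P
    simp only [Set.mem_setOf_eq]
    constructor
    · intro hP
      obtain ⟨g, hg⟩ := A.nonempty P hP
      have hPg : P = SR18.partOf A g := SR18.partOf_eq A hP hg
      have hgz : z ^ SR18.zexp z hgen g = g := hzspec g
      rcases lt_trichotomy (SR18.zexp z hgen g) 0 with hlt | heq | hgt
      · refine ⟨-(SR18.zexp z hgen g), ?_⟩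
        have h := hpartEq (-(SR18.zexp z hgen g)) (by omega)
        have hg2 : g ∈ SR18.partOf A (z ^ (-(SR18.zexp z hgen g))) := by
          rw [h]
          refine Finset.mem_insert.mpr (Or.inr ?_)
          rw [Finset.mem_singleton, neg_neg, hgz]
        have h3 := SR18.partOf_eq A (SR18.partOf_mem A (z ^ (-(SR18.zexp z hgen g)))) hg2
        rw [hPg, ← h3, h, neg_neg]
      · refine ⟨0, ?_⟩
        have hg1 : g = 1 := by rw [← hgz, heq, zpow_zero]
        rw [hPg, hg1, SR18.partOf_one]
        simp
      · refine ⟨SR18.zexp z hgen g, ?_⟩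
        have h4 : SR18.partOf A g = SR18.partOf A (z ^ SR18.zexp z hgen g) := by rw [hgz]
        rw [hPg, h4, hpartEq _ (by omega)]
    · rintro ⟨i, rfl⟩
      rcases lt_trichotomy i 0 with hlt | heq | hgt
      · have h := hpartEq (-i) (by omega)
        have h2 : ({z ^ i, z ^ (-i)} : Finset G) = SR18.partOf A (z ^ (-i)) := by
          rw [h, neg_neg, Finset.pair_comm]
        rw [h2]; exact SR18.partOf_mem A _
      · subst heq
        have h2 : ({z ^ (0:ℤ), z ^ (-(0:ℤ))} : Finset G) = {1} := by
          norm_num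
        rw [h2]; exact A.one_mem
      · rw [← hpartEq i (by omega)]; exact SR18.partOf_mem A _
end
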